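/- arXiv:1904.06283 — 7 statements merged into one kernel-verified Lean document; each statement's English description precedes it below -/
import Mathlib

section
/- If i, j ∈ [n-1] with |i - j| ≥ 2, then the polyurethane toggles p_i and p_j commute: p_i(p_j(π)) = p_j(p_i(π)) for all π ∈ S_n. -/
/-- `l` is a permutation of `{1, …, n}`, written as a word. -/
def IsPermList (n : ℕ) (l : List ℕ) : Prop := l.Perm (List.range' 1 n)

/-- The word obtained from `l` by exchanging the positions of the entries `i` and `i+1`. -/
def swapEntries (i : ℕ) (l : List ℕ) : List ℕ :=
  l.map fun x => if x = i then i + 1 else if x = i + 1 then i else x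

/-- Some entry larger than `i+1` appears (strictly) between the entries `i` and `i+1`
in the word `l`. -/
def ToggleApplies (i : ℕ) (l : List ℕ) : Prop :=
  ∃ a ∈ l, i + 1 < a ∧
    min (l.idxOf i) (l.idxOf (i + 1)) < l.idxOf a ∧
    l.idxOf a < max (l.idxOf i) (l.idxOf (i + 1))

open scoped Classical in
/-- The polyurethane toggle `p i`. -/
noncomputable def toggle (i : ℕ) (l : List ℕ) : List ℕ :=
  if ToggleApplies i l then swapEntries i l else l



private def sf (i x : ℕ) : ℕ := if x = i then i + 1 else if x = i + 1 then i else x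

private lemma sf_inj (i : ℕ) : Function.Injective (sf i) := by
  have : Function.Involutive (sf i) := by
    intro x; unfold sf; split_ifs <;> omega
  exact this.injective

private lemma indexOf_map {f : ℕ → ℕ} (hf : Function.Injective f) :
    ∀ (l : List ℕ) (a : ℕ), (l.map f).idxOf (f a) = l.idxOf a := by
  intro l a
  induction l with
  | nil => simp
  | cons b t ih =>
    simp only [List.map_cons, List.idxOf_cons, ih]
    have : (f b == f a) = (b == a) := by
      by_cases h : b = a
      · simp [h]
      · simp [h, hf.ne h]
    rw [this]

private lemma toggleApplies_swap (i j : ℕ) (hij : i + 2 ≤ j ∨ j + 2 ≤ i) (l : List ℕ) :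
    ToggleApplies i (swapEntries j l) ↔ ToggleApplies i l := by
  have hmap : swapEntries j l = l.map (sf j) := rfl
  have hgt : ∀ b, (i + 1 < sf j b ↔ i + 1 < b) := by
    intro b; unfold sf; split_ifs <;> omega
  have hfi : sf j i = i := by unfold sf; split_ifs <;> omega
  have hfi1 : sf j (i+1) = i + 1 := by unfold sf; split_ifs <;> omega
  have hidx : ∀ a, (swapEntries j l).idxOf (sf j a) = l.idxOf a := by
    intro a; rw [hmap]; exact indexOf_map (sf_inj j) l a
  have hI : (swapEntries j l).idxOf i = l.idxOf i := by
    conv_lhs => rw [← hfi]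
    exact hidx i
  have hI1 : (swapEntries j l).idxOf (i+1) = l.idxOf (i+1) := by
    conv_lhs => rw [← hfi1]
    exact hidx (i+1)
  constructor
  · rintro ⟨a, ha, h2, h3, h4⟩
    rw [hmap, List.mem_map] at ha
    obtain ⟨b, hb, rfl⟩ := ha
    rw [hI, hI1, hidx] at h3 h4
    exact ⟨b, hb, (hgt b).mp h2, h3, h4⟩
  · rintro ⟨b, hb, h2, h3, h4⟩
    refine ⟨sf j b, ?_, (hgt b).mpr h2, ?_, ?_⟩
    · rw [hmap, List.mem_map]; exact ⟨b, hb, rfl⟩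
    · rw [hI, hI1, hidx]; exact h3
    · rw [hI, hI1, hidx]; exact h4

private lemma swapEntries_comm (i j : ℕ) (hij : i + 2 ≤ j ∨ j + 2 ≤ i) (l : List ℕ) :
    swapEntries i (swapEntries j l) = swapEntries j (swapEntries i l) := by
  unfold swapEntries
  rw [List.map_map, List.map_map]
  apply List.map_congr_left
  intro x _
  simp only [Function.comp]
  split_ifs <;> omega

theorem toggle_commute' (i j : ℕ) (hij : i + 2 ≤ j ∨ j + 2 ≤ i) (l : List ℕ) :
    toggle i (toggle j l) = toggle j (toggle i l) := by
  have hTi := toggleApplies_swap i j hij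
  have hTj := toggleApplies_swap j i hij.symm
  have hsw := swapEntries_comm i j hij l
  by_cases hA : ToggleApplies i l <;> by_cases hB : ToggleApplies j l <;>
    simp [toggle, hA, hB, hTi, hTj, hsw]

/-- Polyurethane toggles `p i` and `p j` commute when `|i - j| ≥ 2`. -/
theorem toggle_commute (n i j : ℕ) (hi₁ : 1 ≤ i) (hi₂ : i ≤ n - 1)
    (hj₁ : 1 ≤ j) (hj₂ : j ≤ n - 1) (hij : i + 2 ≤ j ∨ j + 2 ≤ i)
    (l : List ℕ) (hl : IsPermList n l) :
    toggle i (toggle j l) = toggle j (toggle i l) :=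
  toggle_commute' i j hij l
end

section
/- For every i ∈ [n-1] and π ∈ S_n, p_i(rev(π)) = rev(p_i(π)), where rev is the reversal operator on words. -/
lemma indexOf_reverse_nodup {l : List ℕ} (h : l.Nodup) {x : ℕ} (hx : x ∈ l) :
    l.reverse.idxOf x = l.length - 1 - l.idxOf x := by
  have hk : l.idxOf x < l.length := List.idxOf_lt_length_iff.2 hx
  have hj : l.length - 1 - l.idxOf x < l.reverse.length := by
    simp; omega
  have hx' : l.reverse[l.length - 1 - l.idxOf x] = x := by
    rw [List.getElem_reverse]
    have he : l.length - 1 - (l.length - 1 - l.idxOf x) = l.idxOf x := by omega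
    simp only [he]
    exact List.getElem_idxOf hk
  have := List.Nodup.idxOf_getElem (List.nodup_reverse.2 h) _ hj
  rwa [hx'] at this

lemma toggleApplies_reverse_of {i : ℕ} {l : List ℕ} (h : l.Nodup)
    (hi : i ∈ l) (hi1 : i + 1 ∈ l) (ht : ToggleApplies i l) :
    ToggleApplies i l.reverse := by
  obtain ⟨a, ha, hlt, h1, h2⟩ := ht
  refine ⟨a, List.mem_reverse.2 ha, hlt, ?_, ?_⟩ <;>
  · rw [indexOf_reverse_nodup h hi, indexOf_reverse_nodup h hi1,
      indexOf_reverse_nodup h ha]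
    have := List.idxOf_lt_length_iff.2 hi
    have := List.idxOf_lt_length_iff.2 hi1
    have := List.idxOf_lt_length_iff.2 ha
    omega

/-- Each polyurethane toggle commutes with the reversal operator. -/
theorem toggle_reverse (n i : ℕ) (hi₁ : 1 ≤ i) (hi₂ : i ≤ n - 1)
    (l : List ℕ) (hl : IsPermList n l) :
    toggle i l.reverse = (toggle i l).reverse := by
  have hnd : l.Nodup := hl.nodup_iff.2 (List.nodup_range' (s := 1) (n := n))
  have hmem : ∀ x, x ∈ l ↔ 1 ≤ x ∧ x < 1 + n := by
    intro x
    rw [hl.mem_iff, List.mem_range'_1]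
  have hi : i ∈ l := (hmem i).2 ⟨hi₁, by omega⟩
  have hi1 : i + 1 ∈ l := (hmem (i + 1)).2 ⟨by omega, by omega⟩
  have hiff : ToggleApplies i l.reverse ↔ ToggleApplies i l := by
    constructor
    · intro h
      have := toggleApplies_reverse_of (List.nodup_reverse.2 hnd)
        (List.mem_reverse.2 hi) (List.mem_reverse.2 hi1) h
      rwa [List.reverse_reverse] at this
    · exact toggleApplies_reverse_of hnd hi hi1
  unfold toggle
  by_cases h : ToggleApplies i l
  · rw [if_pos (hiff.2 h), if_pos h]
    simp [swapEntries]
  · rw [if_neg (fun h' => h (hiff.1 h')), if_neg h]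
end

section
/- If a permutation π ∈ S_n contains the pattern 231, then there exist i ∈ [n-1] and an entry a > i+1 such that i+1 appears to the left of a and i appears to the right of a in π; in particular p_i(π) = swap_i(π) ≠ π. -/
/-- `l` contains the pattern 231. -/
def Contains231 (l : List ℕ) : Prop :=
  ∃ j₁ j₂ j₃, j₁ < j₂ ∧ j₂ < j₃ ∧ j₃ < l.length ∧
    l.getD j₃ 0 < l.getD j₁ 0 ∧ l.getD j₁ 0 < l.getD j₂ 0

/-- `l` avoids the pattern 231. -/
def Avoids231 (l : List ℕ) : Prop := ¬ Contains231 l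

/-- `l` avoids the pattern 132. -/
def Avoids132 (l : List ℕ) : Prop :=
  ¬ ∃ j₁ j₂ j₃, j₁ < j₂ ∧ j₂ < j₃ ∧ j₃ < l.length ∧
    l.getD j₁ 0 < l.getD j₃ 0 ∧ l.getD j₃ 0 < l.getD j₂ 0

/-- `l` avoids the pattern 312. -/
def Avoids312 (l : List ℕ) : Prop :=
  ¬ ∃ j₁ j₂ j₃, j₁ < j₂ ∧ j₂ < j₃ ∧ j₃ < l.length ∧
    l.getD j₂ 0 < l.getD j₃ 0 ∧ l.getD j₃ 0 < l.getD j₁ 0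

/-- If `π ∈ Sₙ` contains the pattern 231, then there are `i ∈ [n-1]` and an entry `a > i+1`
with `i+1` to the left of `a` and `i` to the right of `a` in `π`; in particular
`p i (π) = swapᵢ(π) ≠ π`. -/
theorem exists_toggle_of_contains231 (n : ℕ) (l : List ℕ) (hl : IsPermList n l)
    (h231 : Contains231 l) :
    ∃ i, 1 ≤ i ∧ i ≤ n - 1 ∧
      (∃ a ∈ l, i + 1 < a ∧ l.idxOf (i + 1) < l.idxOf a ∧ l.idxOf a < l.idxOf i) ∧
      toggle i l = swapEntries i l ∧ swapEntries i l ≠ l := by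
  classical
  obtain ⟨j₁, j₂, j₃, h12, h23, h3len, hzx, hxy⟩ := h231
  have h2len : j₂ < l.length := h23.trans h3len
  have h1len : j₁ < l.length := h12.trans h2len
  set x := l.getD j₁ 0 with hx
  set y := l.getD j₂ 0 with hy
  set z := l.getD j₃ 0 with hz
  have hnd : l.Nodup := hl.nodup_iff.mpr (List.nodup_range' (s := 1) (n := n))
  have hmem : ∀ v, v ∈ l ↔ 1 ≤ v ∧ v ≤ n := by
    intro v
    rw [hl.mem_iff, List.mem_range'_1]
    omega
  have hxg : x = l[j₁] := by rw [hx, List.getD_eq_getElem _ _ h1len]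
  have hyg : y = l[j₂] := by rw [hy, List.getD_eq_getElem _ _ h2len]
  have hzg : z = l[j₃] := by rw [hz, List.getD_eq_getElem _ _ h3len]
  have hxl : x ∈ l := hxg ▸ List.getElem_mem h1len
  have hyl : y ∈ l := hyg ▸ List.getElem_mem h2len
  have hzl : z ∈ l := hzg ▸ List.getElem_mem h3len
  have hix : l.idxOf x = j₁ := by rw [hxg]; exact List.Nodup.idxOf_getElem hnd _ _
  have hiy : l.idxOf y = j₂ := by rw [hyg]; exact List.Nodup.idxOf_getElem hnd _ _
  have hiz : l.idxOf z = j₃ := by rw [hzg]; exact List.Nodup.idxOf_getElem hnd _ _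
  have hz1 : 1 ≤ z := ((hmem z).mp hzl).1
  have hxn : x ≤ n := ((hmem x).mp hxl).2
  have hzx1 : z ≤ x - 1 := by omega
  set P : ℕ → Prop := fun v => j₂ < l.idxOf v with hP
  have hPz : P z := by rw [hP]; simp only [hiz]; omega
  set i := Nat.findGreatest P (x - 1) with hi
  have hPi : P i := Nat.findGreatest_spec hzx1 hPz
  have hzi : z ≤ i := Nat.le_findGreatest hzx1 hPz
  have hix1 : i ≤ x - 1 := Nat.findGreatest_le _
  have hi1n : 1 ≤ i := le_trans hz1 hzi
  have hi1l : i + 1 ∈ l := (hmem _).mpr (by omega)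
  have hil : i ∈ l := (hmem _).mpr (by omega)
  -- index of i+1 is at most j₂
  have hne : l.idxOf (i + 1) ≠ j₂ := by
    intro h
    rw [← hiy] at h
    have := (List.idxOf_inj hi1l).mp h
    omega
  have hlt2 : l.idxOf (i + 1) < j₂ := by
    rcases eq_or_lt_of_le (show i + 1 ≤ x by omega) with h | h
    · rw [h, hix]; exact h12
    · have hnP : ¬ P (i + 1) :=
        Nat.findGreatest_is_greatest (P := P) (n := x - 1) (by omega) (by omega)
      rw [hP] at hnP
      omega
  have hgt : j₂ < l.idxOf i := hPi
  have hTA : ToggleApplies i l := by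
    refine ⟨y, hyl, by omega, ?_, ?_⟩
    · rw [hiy]; exact lt_of_le_of_lt (min_le_right _ _) hlt2
    · rw [hiy]; exact lt_of_lt_of_le hgt (le_max_left _ _)
  have hswap : swapEntries i l ≠ l := by
    intro hEq
    have hkl : l.idxOf i < l.length := List.idxOf_lt_length_iff.2 hil
    have hkl' : l.idxOf i < (swapEntries i l).length := by
      simpa [swapEntries] using hkl
    have h1 : (swapEntries i l)[l.idxOf i] = i + 1 := by
      simp [swapEntries, List.getElem_idxOf hkl]
    rw [List.getElem_of_eq hEq, List.getElem_idxOf hkl] at h1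
    omega
  exact ⟨i, hi1n, by omega, ⟨y, hyl, by omega, by rw [hiy]; exact ⟨hlt2, hgt⟩⟩,
    if_pos hTA, hswap⟩
end

section
/- Every orbit of the action of the polyurethane group 𝒫_n = ⟨p_1, ..., p_{n-1}⟩ on S_n contains at least one 231-avoiding permutation. -/
/-- One application of a polyurethane toggle `p i`, `i ∈ [n-1]`. -/
def ToggleStep (n : ℕ) (x y : List ℕ) : Prop :=
  ∃ i, 1 ≤ i ∧ i ≤ n - 1 ∧ y = toggle i x

/-- `x` and `y` lie in the same orbit of the polyurethane group
`𝒫ₙ = ⟨p₁, …, p_{n-1}⟩` acting on permutations. -/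
def OrbitRel (n : ℕ) : List ℕ → List ℕ → Prop := Relation.EqvGen (ToggleStep n)

/-! ### Auxiliary material -/

namespace Poly231

/-- The value map underlying `swapEntries`. -/
def swapFun (i : ℕ) : ℕ → ℕ := fun x => if x = i then i + 1 else if x = i + 1 then i else x

lemma swapEntries_eq_map (i : ℕ) (l : List ℕ) : swapEntries i l = l.map (swapFun i) := rfl

lemma swapFun_invol (i x : ℕ) : swapFun i (swapFun i x) = x := by
  simp only [swapFun]; split_ifs <;> omega

lemma swapFun_injective (i : ℕ) : Function.Injective (swapFun i) :=
  Function.LeftInverse.injective (swapFun_invol i)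

lemma swapFun_lt {i v w : ℕ} (h : swapFun i v < swapFun i w) :
    v < w ∨ (v = i + 1 ∧ w = i) := by
  simp only [swapFun] at h; split_ifs at h <;> omega

lemma mem_range1 {n x : ℕ} : x ∈ List.range' 1 n ↔ 1 ≤ x ∧ x ≤ n := by
  rw [List.mem_range']
  constructor
  · rintro ⟨i, hi, rfl⟩; omega
  · intro h; exact ⟨x - 1, by omega, by omega⟩

lemma getD_eq (l : List ℕ) {j : ℕ} (h : j < l.length) : l.getD j 0 = l[j] := by
  simp [List.getD_eq_getElem?_getD, List.getElem?_eq_getElem h]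

/-- The set of inversions of a word. -/
def invSet (l : List ℕ) : Finset (ℕ × ℕ) :=
  (Finset.range l.length ×ˢ Finset.range l.length).filter
    fun q => q.1 < q.2 ∧ l.getD q.2 0 < l.getD q.1 0

lemma mem_invSet {l : List ℕ} {q : ℕ × ℕ} :
    q ∈ invSet l ↔ q.1 < q.2 ∧ q.2 < l.length ∧ l.getD q.2 0 < l.getD q.1 0 := by
  simp only [invSet, Finset.mem_filter, Finset.mem_product, Finset.mem_range]
  constructor
  · rintro ⟨⟨h1, h2⟩, h3, h4⟩; exact ⟨h3, h2, h4⟩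
  · rintro ⟨h1, h2, h3⟩; exact ⟨⟨by omega, h2⟩, h1, h3⟩

lemma nodup_of_perm {n : ℕ} {l : List ℕ} (hl : IsPermList n l) : l.Nodup :=
  hl.nodup_iff.2 (List.nodup_range' (s := 1) (n := n))

lemma mem_iff_of_perm {n : ℕ} {l : List ℕ} (hl : IsPermList n l) (x : ℕ) :
    x ∈ l ↔ 1 ≤ x ∧ x ≤ n := by
  rw [hl.mem_iff, mem_range1]

/-- `swapEntries` preserves being a permutation (when `1 ≤ i` and `i+1 ≤ n`). -/
lemma isPermList_swap {n i : ℕ} {l : List ℕ} (hi1 : 1 ≤ i) (hi2 : i + 1 ≤ n)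
    (hl : IsPermList n l) : IsPermList n (swapEntries i l) := by
  rw [IsPermList, swapEntries_eq_map, List.perm_iff_count]
  intro x
  have hx : x = swapFun i (swapFun i x) := (swapFun_invol i x).symm
  have h1 : List.count x (l.map (swapFun i)) = List.count (swapFun i x) l := by
    conv_lhs => rw [hx]
    exact List.count_map_of_injective l (swapFun i) (swapFun_injective i) _
  rw [h1, List.Perm.count_eq hl]
  have hmem : swapFun i x ∈ List.range' 1 n ↔ x ∈ List.range' 1 n := by
    simp only [mem_range1, swapFun]; split_ifs <;> omega
  by_cases h : x ∈ List.range' 1 n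
  · rw [List.count_eq_one_of_mem (List.nodup_range' (s := 1) (n := n)) (hmem.2 h),
      List.count_eq_one_of_mem (List.nodup_range' (s := 1) (n := n)) h]
  · rw [List.count_eq_zero_of_not_mem (fun hc => h (hmem.1 hc)),
      List.count_eq_zero_of_not_mem h]

lemma getD_uniq {l : List ℕ} (hnd : l.Nodup) {j k : ℕ} (hj : j < l.length)
    (hk : k < l.length) (h : l.getD j 0 = l.getD k 0) : j = k := by
  rw [getD_eq l hj, getD_eq l hk] at h
  have h1 := List.Nodup.idxOf_getElem hnd j hj
  have h2 := List.Nodup.idxOf_getElem hnd k hk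
  rw [h] at h1
  omega

/-- The number of inversions strictly decreases when we swap `i` and `i+1`
with `i+1` appearing before `i`. -/
lemma invSet_ssubset {i : ℕ} {l : List ℕ} (hnd : l.Nodup) {p p' : ℕ}
    (hp : p < l.length) (hvp : l.getD p 0 = i) (hvp' : l.getD p' 0 = i + 1)
    (hpp : p' < p) : invSet (swapEntries i l) ⊂ invSet l := by
  have hp' : p' < l.length := lt_trans hpp hp
  have hlen : (swapEntries i l).length = l.length := by
    rw [swapEntries_eq_map, List.length_map]
  have hg : ∀ j, j < l.length → (swapEntries i l).getD j 0 = swapFun i (l.getD j 0) := by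
    intro j hj
    rw [getD_eq _ (by omega : j < (swapEntries i l).length), getD_eq l hj]
    simp only [swapEntries_eq_map, List.getElem_map]
  constructor
  · intro q hq
    rw [mem_invSet] at hq ⊢
    obtain ⟨h1, h2, h3⟩ := hq
    rw [hlen] at h2
    rw [hg q.1 (by omega), hg q.2 h2] at h3
    refine ⟨h1, h2, ?_⟩
    rcases swapFun_lt h3 with h | ⟨ha, hb⟩
    · exact h
    · -- q.2 holds value i+1, q.1 holds value i: impossible positions
      have e1 : q.2 = p' := getD_uniq hnd h2 hp' (by rw [ha, hvp'])
      have e2 : q.1 = p := getD_uniq hnd (by omega) hp (by rw [hb, hvp])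
      omega
  · intro hsub
    have hmem : (p', p) ∈ invSet l := by
      rw [mem_invSet]
      exact ⟨hpp, hp, by rw [hvp, hvp']; omega⟩
    have hmem' := hsub hmem
    rw [mem_invSet] at hmem'
    obtain ⟨_, _, h3⟩ := hmem'
    rw [hg p hp, hg p' hp', hvp, hvp'] at h3
    simp only [swapFun] at h3
    split_ifs at h3 <;> omega

/-- If `l` contains a 231 pattern, some toggle applies with `i+1` before `i`. -/
lemma contains_toggle {n : ℕ} {l : List ℕ} (hl : IsPermList n l) (h : Contains231 l) :
    ∃ i p p', 1 ≤ i ∧ i + 1 ≤ n ∧ p' < p ∧ p < l.length ∧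
      l.getD p 0 = i ∧ l.getD p' 0 = i + 1 ∧ ToggleApplies i l := by
  have hnd := nodup_of_perm hl
  obtain ⟨j1, j2, j3, h1, h2, h3, h4, h5⟩ := h
  suffices H : ∀ d j1 j2 j3, j1 < j2 → j2 < j3 → j3 < l.length →
      l.getD j3 0 < l.getD j1 0 → l.getD j1 0 < l.getD j2 0 →
      l.getD j1 0 - l.getD j3 0 ≤ d →
      ∃ i p p', 1 ≤ i ∧ i + 1 ≤ n ∧ p' < p ∧ p < l.length ∧
        l.getD p 0 = i ∧ l.getD p' 0 = i + 1 ∧ ToggleApplies i l by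
    exact H _ j1 j2 j3 h1 h2 h3 h4 h5 le_rfl
  intro d
  induction d with
  | zero =>
    intro j1 j2 j3 h1 h2 h3 h4 h5 h6
    exact absurd h6 (by omega)
  | succ d ih =>
    intro j1 j2 j3 h1 h2 h3 h4 h5 h6
    have hj1 : j1 < l.length := by omega
    have hj2 : j2 < l.length := by omega
    -- values are in [1, n]
    have hv1 : l.getD j1 0 ∈ l := by rw [getD_eq l hj1]; exact List.getElem_mem _
    have hv2 : l.getD j2 0 ∈ l := by rw [getD_eq l hj2]; exact List.getElem_mem _
    have hv3 : l.getD j3 0 ∈ l := by rw [getD_eq l h3]; exact List.getElem_mem _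
    rw [mem_iff_of_perm hl] at hv1 hv2 hv3
    by_cases hgap : l.getD j1 0 = l.getD j3 0 + 1
    · -- base case: i := value at j3
      refine ⟨l.getD j3 0, j3, j1, by omega, by omega, by omega, h3, rfl, by omega, ?_⟩
      -- indices
      have e1 : l.idxOf (l.getD j3 0) = j3 := by
        rw [getD_eq l h3]; exact List.Nodup.idxOf_getElem hnd _ _
      have e2 : l.idxOf (l.getD j3 0 + 1) = j1 := by
        rw [← hgap, getD_eq l hj1]; exact List.Nodup.idxOf_getElem hnd _ _
      have e3 : l.idxOf (l.getD j2 0) = j2 := by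
        rw [getD_eq l hj2]; exact List.Nodup.idxOf_getElem hnd _ _
      refine ⟨l.getD j2 0, by rw [getD_eq l hj2]; exact List.getElem_mem _, by omega, ?_, ?_⟩
      · rw [e1, e2, e3]; omega
      · rw [e1, e2, e3]; omega
    · -- recursive case: v := value at j3 + 1, locate it
      set v := l.getD j3 0 + 1 with hv
      have hvmem : v ∈ l := by rw [mem_iff_of_perm hl]; omega
      set p := l.idxOf v with hpdef
      have hplt : p < l.length := List.idxOf_lt_length_iff.2 hvmem
      have hpv : l.getD p 0 = v := by
        rw [getD_eq l hplt]; exact List.getElem_idxOf hplt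
      have hpne2 : p ≠ j2 := by
        intro he; rw [he] at hpv; omega
      rcases lt_or_gt_of_ne hpne2 with hlt | hgt
      · -- new pattern (p, j2, j3), gap 1
        exact ih p j2 j3 hlt h2 h3 (by omega) (by omega) (by omega)
      · -- new pattern (j1, j2, p), gap decreases
        exact ih j1 j2 p h1 hgt hplt (by omega) h5 (by omega)

end Poly231

open Poly231 in
/-- Every orbit of the polyurethane group `𝒫ₙ` acting on `Sₙ` contains at least one
231-avoiding permutation. -/
theorem orbit_contains_avoids231 (n : ℕ) (l : List ℕ) (hl : IsPermList n l) :
    ∃ l', IsPermList n l' ∧ OrbitRel n l l' ∧ Avoids231 l' := by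
  suffices H : ∀ k (l : List ℕ), IsPermList n l → (invSet l).card ≤ k →
      ∃ l', IsPermList n l' ∧ OrbitRel n l l' ∧ Avoids231 l' from H _ l hl le_rfl
  intro k
  induction k with
  | zero =>
    intro l hl hcard
    refine ⟨l, hl, Relation.EqvGen.refl l, ?_⟩
    rintro ⟨j1, j2, j3, h1, h2, h3, h4, h5⟩
    have hmem : ((j2, j3) : ℕ × ℕ) ∈ invSet l := by
      rw [mem_invSet]; exact ⟨h2, h3, lt_trans h4 h5⟩
    have := Finset.card_pos.mpr ⟨_, hmem⟩
    omega
  | succ k ih =>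
    intro l hl hcard
    by_cases hc : Contains231 l
    · obtain ⟨i, p, p', hi1, hi2, hpp, hp, hvp, hvp', happ⟩ := contains_toggle hl hc
      have hnd := nodup_of_perm hl
      have hss := invSet_ssubset hnd hp hvp hvp' hpp
      have hlt : (invSet (swapEntries i l)).card < (invSet l).card :=
        Finset.card_lt_card hss
      have hl₂ : IsPermList n (swapEntries i l) := isPermList_swap hi1 hi2 hl
      obtain ⟨l', ha, hb, hcAvoid⟩ := ih (swapEntries i l) hl₂ (by omega)
      have hstep : ToggleStep n l (swapEntries i l) :=
        ⟨i, hi1, by omega, by rw [toggle, if_pos happ]⟩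
      exact ⟨l', ha, Relation.EqvGen.trans _ _ _ (Relation.EqvGen.rel _ _ hstep) hb, hcAvoid⟩
    · exact ⟨l, hl, Relation.EqvGen.refl l, hc⟩
end

section
/- The number of orbits of the polyurethane group 𝒫_n acting on S_n equals the n-th Catalan number C_n = (1/(n+1))·binom(2n, n). -/
open List

lemma nat_max?_eq_some_iff {l : List ℕ} {m : ℕ} :
    l.max? = some m ↔ m ∈ l ∧ ∀ b ∈ l, b ≤ m :=
  List.max?_eq_some_iff

noncomputable def shape (l : List ℕ) : BinaryTree Unit :=
  match h : l.max? with
  | none => BinaryTree.nil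
  | some m =>
    have hm : m ∈ l := (nat_max?_eq_some_iff.mp h).1
    have hk : List.idxOf m l < l.length := List.idxOf_lt_length_iff.mpr hm
    BinaryTree.node () (shape (l.take (List.idxOf m l))) (shape (l.drop (List.idxOf m l + 1)))
termination_by l.length
decreasing_by
  · simp only [List.length_take]; omega
  · simp only [List.length_drop]; omega

@[simp] lemma shape_nil : shape [] = BinaryTree.nil := by
  rw [shape]; rfl

lemma shape_eq_of_max? {l : List ℕ} {m : ℕ} (h : l.max? = some m) :
    shape l = BinaryTree.node () (shape (l.take (List.idxOf m l)))
      (shape (l.drop (List.idxOf m l + 1))) := by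
  rw [shape]
  split
  · simp_all
  · rename_i m' h'; rw [h] at h'; cases h'; rfl

lemma shape_split {u v : List ℕ} {m : ℕ} (hu : ∀ x ∈ u, x < m) (hv : ∀ x ∈ v, x < m) :
    shape (u ++ m :: v) = BinaryTree.node () (shape u) (shape v) := by
  have hmax : (u ++ m :: v).max? = some m := by
    rw [nat_max?_eq_some_iff]
    constructor
    · simp
    · intro b hb
      rcases List.mem_append.mp hb with h | h
      · exact le_of_lt (hu b h)
      · rcases List.mem_cons.mp h with h | h
        · omega
        · exact le_of_lt (hv b h)
  have hnm : m ∉ u := fun h => lt_irrefl m (hu m h)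
  have hidx : List.idxOf m (u ++ m :: v) = u.length := by
    rw [List.idxOf_append_of_notMem hnm]
    simp [List.idxOf_cons]
  rw [shape_eq_of_max? hmax, hidx]
  congr 1
  · rw [List.take_left]
  · have : (u ++ m :: v).drop (u.length + 1) = v := by
      have : u ++ m :: v = (u ++ [m]) ++ v := by simp
      rw [this]
      have hl : (u ++ [m]).length = u.length + 1 := by simp
      rw [← hl, List.drop_left]
    rw [this]

lemma numNodes_shape (l : List ℕ) : (shape l).numNodes = l.length := by
  generalize hN : l.length = N
  induction N using Nat.strong_induction_on generalizing l with
  | _ N IH =>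
    cases hmax : l.max? with
    | none =>
      rw [List.max?_eq_none_iff] at hmax; subst hmax; simp at hN; simp [← hN]
    | some m =>
      have hm : m ∈ l := (nat_max?_eq_some_iff.mp hmax).1
      have hk : List.idxOf m l < l.length := List.idxOf_lt_length_iff.mpr hm
      rw [shape_eq_of_max? hmax]
      have h1 := IH (l.take (List.idxOf m l)).length (by simp; omega)
        (l.take (List.idxOf m l)) rfl
      have h2 := IH (l.drop (List.idxOf m l + 1)).length (by simp; omega)
        (l.drop (List.idxOf m l + 1)) rfl
      simp only [BinaryTree.numNodes, h1, h2, List.length_take, List.length_drop]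
      omega

lemma indexOf_map_of_inj (f : ℕ → ℕ) (l : List ℕ) (a : ℕ)
    (hinj : ∀ x ∈ l, f x = f a → x = a) :
    List.idxOf (f a) (l.map f) = List.idxOf a l := by
  induction l with
  | nil => simp
  | cons b t IH =>
    simp only [List.map_cons, List.idxOf_cons]
    by_cases hba : b = a
    · subst hba; simp
    · have hfba : f b ≠ f a := fun h => hba (hinj b (by simp) h)
      rw [cond_eq_if, cond_eq_if]
      simp [hba, hfba, IH (fun x hx h => hinj x (by simp [hx]) h)]

lemma shape_map_iso (f : ℕ → ℕ) (l : List ℕ)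
    (hf : ∀ x ∈ l, ∀ y ∈ l, f x < f y ↔ x < y) :
    shape (l.map f) = shape l := by
  generalize hN : l.length = N
  induction N using Nat.strong_induction_on generalizing l with
  | _ N IH =>
    cases hmax : l.max? with
    | none =>
      rw [List.max?_eq_none_iff] at hmax; subst hmax; rfl
    | some m =>
      obtain ⟨hm, hub⟩ := nat_max?_eq_some_iff.mp hmax
      have hk : List.idxOf m l < l.length := List.idxOf_lt_length_iff.mpr hm
      have hinj : ∀ x ∈ l, ∀ y ∈ l, f x = f y → x = y := by
        intro x hx y hy h
        have h1 := hf x hx y hy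
        have h2 := hf y hy x hx
        omega
      have hmax' : (l.map f).max? = some (f m) := by
        rw [nat_max?_eq_some_iff]
        refine ⟨List.mem_map_of_mem hm, ?_⟩
        intro b hb
        obtain ⟨x, hx, rfl⟩ := List.mem_map.mp hb
        have := hf m hm x hx
        have := hub x hx
        omega
      have hidx : List.idxOf (f m) (l.map f) = List.idxOf m l :=
        indexOf_map_of_inj f l m (fun x hx h => hinj x hx m hm h)
      rw [shape_eq_of_max? hmax, shape_eq_of_max? hmax', hidx]
      rw [← List.map_take, ← List.map_drop]
      congr 1
      · exact IH (l.take (List.idxOf m l)).length (by simp; omega)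
          _ (fun x hx y hy => hf x (List.take_subset _ _ hx) y (List.take_subset _ _ hy)) rfl
      · exact IH (l.drop (List.idxOf m l + 1)).length (by simp; omega)
          _ (fun x hx y hy => hf x (List.drop_subset _ _ hx) y (List.drop_subset _ _ hy)) rfl

/-- The swapping function underlying `swapEntries`. -/
def swapFun (i : ℕ) (x : ℕ) : ℕ := if x = i then i + 1 else if x = i + 1 then i else x

lemma swapFun_invol (i x : ℕ) : swapFun i (swapFun i x) = x := by
  unfold swapFun; split_ifs <;> omega

lemma swapFun_inj (i : ℕ) : Function.Injective (swapFun i) := by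
  intro x y h
  have := swapFun_invol i x
  have := swapFun_invol i y
  rw [h] at *; omega

lemma shape_map_swap_of_not_mem_left (i : ℕ) (l : List ℕ) (h : i + 1 ∉ l) :
    shape (l.map (swapFun i)) = shape l := by
  apply shape_map_iso
  intro x hx y hy
  have hx1 : x ≠ i + 1 := fun he => h (he ▸ hx)
  have hy1 : y ≠ i + 1 := fun he => h (he ▸ hy)
  unfold swapFun; split_ifs <;> omega

lemma shape_map_swap_of_not_mem_right (i : ℕ) (l : List ℕ) (h : i ∉ l) :
    shape (l.map (swapFun i)) = shape l := by
  apply shape_map_iso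
  intro x hx y hy
  have hx1 : x ≠ i := fun he => h (he ▸ hx)
  have hy1 : y ≠ i := fun he => h (he ▸ hy)
  unfold swapFun; split_ifs <;> omega

lemma indexOf_mid {u v : List ℕ} {m : ℕ} (hmu : m ∉ u) :
    List.idxOf m (u ++ m :: v) = u.length := by
  rw [List.idxOf_append_of_notMem hmu]
  simp [List.idxOf_cons]

lemma indexOf_right_of {u v : List ℕ} {m a : ℕ} (hau : a ∉ u) (ham : a ≠ m) :
    List.idxOf a (u ++ m :: v) = u.length + 1 + List.idxOf a v := by
  rw [List.idxOf_append_of_notMem hau, List.idxOf_cons, cond_eq_if]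
  simp only [beq_iff_eq]
  rw [if_neg (fun h => ham h.symm)]
  omega

lemma mem_left_of_indexOf_lt {u v : List ℕ} {m a : ℕ} (ha : a ∈ u ++ m :: v)
    (h : List.idxOf a (u ++ m :: v) < u.length) :
    a ∈ u ∧ List.idxOf a (u ++ m :: v) = List.idxOf a u := by
  have hlen : List.idxOf a (u ++ m :: v) < (u ++ m :: v).length :=
    List.idxOf_lt_length_iff.mpr ha
  have hget : (u ++ m :: v)[List.idxOf a (u ++ m :: v)]'hlen = a :=
    List.getElem_idxOf hlen
  have hgu : (u ++ m :: v)[List.idxOf a (u ++ m :: v)]'hlen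
      = u[List.idxOf a (u ++ m :: v)]'h := List.getElem_append_left h
  have hau : a ∈ u := by
    rw [← hget, hgu]; exact List.getElem_mem _
  exact ⟨hau, List.idxOf_append_of_mem hau⟩

lemma mem_right_of_indexOf_gt {u v : List ℕ} {m a : ℕ} (hmu : m ∉ u) (ha : a ∈ u ++ m :: v)
    (h : u.length < List.idxOf a (u ++ m :: v)) :
    a ∈ v ∧ List.idxOf a (u ++ m :: v) = u.length + 1 + List.idxOf a v := by
  have hau : a ∉ u := by
    intro hau
    rw [List.idxOf_append_of_mem hau] at h
    have := List.idxOf_lt_length_iff.mpr hau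
    omega
  have ham : a ≠ m := by
    intro he; subst he
    rw [indexOf_mid hmu] at h; omega
  have hav : a ∈ v := by
    rcases List.mem_append.mp ha with h' | h'
    · exact absurd h' hau
    · rcases List.mem_cons.mp h' with h' | h'
      · exact absurd h' ham
      · exact h'
  exact ⟨hav, indexOf_right_of hau ham⟩

/-- The orbit equivalence relation of `𝒫ₙ` on the set of permutations of `{1, …, n}`. -/
def orbitSetoid (n : ℕ) : Setoid {l : List ℕ // IsPermList n l} :=
  Setoid.comap Subtype.val ⟨OrbitRel n, Relation.EqvGen.is_equivalence _⟩

lemma swapEntries_eq_map (i : ℕ) (l : List ℕ) : swapEntries i l = l.map (swapFun i) := rfl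

lemma decomp_at_max {l : List ℕ} {m : ℕ} (hmax : l.max? = some m) :
    l = l.take (List.idxOf m l) ++ m :: l.drop (List.idxOf m l + 1) := by
  have hm : m ∈ l := (nat_max?_eq_some_iff.mp hmax).1
  have hk : List.idxOf m l < l.length := List.idxOf_lt_length_iff.mpr hm
  conv_lhs => rw [← List.take_append_drop (List.idxOf m l) l]
  rw [List.drop_eq_getElem_cons hk, List.getElem_idxOf hk]

lemma not_mem_take_indexOf {l : List ℕ} {m : ℕ} (hm : m ∈ l) :
    m ∉ l.take (List.idxOf m l) := by
  intro hmem
  have h1 : List.idxOf m l < l.length := List.idxOf_lt_length_iff.mpr hm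
  have h2 := List.idxOf_append_of_mem (l₂ := m :: l.drop (List.idxOf m l + 1)) hmem
  have h3 : List.idxOf m l ≤ l.length := le_of_lt h1
  have hlen : (l.take (List.idxOf m l)).length = List.idxOf m l := by
    simp [List.length_take]; omega
  have h4 : List.idxOf m (l.take (List.idxOf m l)) < List.idxOf m l := by
    have := List.idxOf_lt_length_iff.mpr hmem
    omega
  have hdc : l = l.take (List.idxOf m l) ++ m :: l.drop (List.idxOf m l + 1) := by
    conv_lhs => rw [← List.take_append_drop (List.idxOf m l) l]
    rw [List.drop_eq_getElem_cons h1, List.getElem_idxOf h1]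
  have : List.idxOf m l = List.idxOf m (l.take (List.idxOf m l)) := by
    conv_lhs => rw [hdc]
    exact h2
  omega

lemma shape_swapEntries : ∀ (N : ℕ) (l : List ℕ) (i : ℕ), l.length = N → l.Nodup →
    ToggleApplies i l → shape (l.map (swapFun i)) = shape l := by
  intro N
  induction N using Nat.strong_induction_on with
  | _ N IH =>
  intro l i hN hl h
  by_cases hi : i ∈ l
  swap
  · exact shape_map_swap_of_not_mem_right i l hi
  by_cases hi1 : i + 1 ∈ l
  swap
  · exact shape_map_swap_of_not_mem_left i l hi1
  obtain ⟨w, hw, hwgt, hwlt1, hwlt2⟩ := h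
  have hne : l ≠ [] := fun he => by subst he; simp at hi
  obtain ⟨m, hmax⟩ : ∃ m, l.max? = some m := by
    cases hh : l.max? with
    | none => exact absurd (List.max?_eq_none_iff.mp hh) hne
    | some m => exact ⟨m, rfl⟩
  obtain ⟨hm, hub⟩ := nat_max?_eq_some_iff.mp hmax
  obtain ⟨u, v, rfl, hmu, hmv, hxu, hxv⟩ :
      ∃ u v, l = u ++ m :: v ∧ m ∉ u ∧ m ∉ v ∧ (∀ x ∈ u, x < m) ∧ (∀ x ∈ v, x < m) := by
    have hmv' : m ∉ l.drop (List.idxOf m l + 1) := by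
      have hdc := decomp_at_max hmax
      have := hl
      rw [hdc, List.nodup_append] at this
      exact (List.nodup_cons.mp this.2.1).1
    refine ⟨l.take (List.idxOf m l), l.drop (List.idxOf m l + 1), decomp_at_max hmax,
      not_mem_take_indexOf hm, hmv', ?_, ?_⟩
    · intro x hx
      exact lt_of_le_of_ne (hub x (List.take_subset _ _ hx))
        (fun he => (not_mem_take_indexOf hm) (he ▸ hx))
    · intro x hx
      exact lt_of_le_of_ne (hub x (List.drop_subset _ _ hx)) (fun he => hmv' (he ▸ hx))
  have hdis : u.Disjoint (m :: v) := by
    intro x hx hx'; exact (List.nodup_append.mp hl).2.2 x hx x hx' rfl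
  have hnu : u.Nodup := (List.nodup_append.mp hl).1
  have hnv : v.Nodup := (List.nodup_cons.mp (List.nodup_append.mp hl).2.1).2
  have hwm : i + 1 < m := lt_of_lt_of_le hwgt (hub w hw)
  have him : i ≠ m := by omega
  have hi1m : i + 1 ≠ m := by omega
  have hfm : swapFun i m = m := by unfold swapFun; split_ifs <;> omega
  have hmapdc : (u ++ m :: v).map (swapFun i)
      = u.map (swapFun i) ++ m :: v.map (swapFun i) := by
    simp [hfm]
  have hfub : ∀ (t : List ℕ), (∀ x ∈ t, x < m) → ∀ y ∈ t.map (swapFun i), y < m := by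
    intro t ht y hy
    obtain ⟨x, hx, rfl⟩ := List.mem_map.mp hy
    have := ht x hx
    unfold swapFun; split_ifs <;> omega
  have hsplit1 : shape (u ++ m :: v) = BinaryTree.node () (shape u) (shape v) :=
    shape_split hxu hxv
  have hsplit2 : shape ((u ++ m :: v).map (swapFun i))
      = BinaryTree.node () (shape (u.map (swapFun i))) (shape (v.map (swapFun i))) := by
    rw [hmapdc]; exact shape_split (hfub u hxu) (hfub v hxv)
  -- index bookkeeping
  have hk : List.idxOf m (u ++ m :: v) = u.length := indexOf_mid hmu
  have hpl : List.idxOf i (u ++ m :: v) < (u ++ m :: v).length := List.idxOf_lt_length_iff.mpr hi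
  have hql : List.idxOf (i+1) (u ++ m :: v) < (u ++ m :: v).length :=
    List.idxOf_lt_length_iff.mpr hi1
  have hpk : List.idxOf i (u ++ m :: v) ≠ u.length := by
    rw [← hk]; intro he; exact him ((List.idxOf_inj hi).mp he)
  have hqk : List.idxOf (i+1) (u ++ m :: v) ≠ u.length := by
    rw [← hk]; intro he; exact hi1m ((List.idxOf_inj hi1).mp he)
  have hlu : u.length < N := by simp at hN; omega
  have hlv : v.length < N := by simp at hN; omega
  rcases lt_or_gt_of_ne hpk with hp | hp <;> rcases lt_or_gt_of_ne hqk with hq | hq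
  · -- both i and i+1 in u
    obtain ⟨hiu, hpi⟩ := mem_left_of_indexOf_lt hi hp
    obtain ⟨hi1u, hqi⟩ := mem_left_of_indexOf_lt hi1 hq
    have hwlt : List.idxOf w (u ++ m :: v) < u.length := by omega
    obtain ⟨hwu, hri⟩ := mem_left_of_indexOf_lt hw hwlt
    have happ : ToggleApplies i u := ⟨w, hwu, hwgt, by rw [← hpi, ← hqi, ← hri]; omega,
      by rw [← hpi, ← hqi, ← hri]; omega⟩
    have h1 : shape (u.map (swapFun i)) = shape u := IH u.length hlu u i rfl hnu happ
    have h2 : v.map (swapFun i) = v := by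
      have : ∀ x ∈ v, swapFun i x = x := by
        intro x hx
        have hxi : x ≠ i := fun he => hdis (he ▸ hiu) (by simp [he] at hx ⊢; exact Or.inr hx)
        have hxi1 : x ≠ i + 1 := fun he => hdis (he ▸ hi1u) (by simp [he] at hx ⊢; exact Or.inr hx)
        unfold swapFun; split_ifs <;> omega
      rw [List.map_congr_left this, List.map_id']
    rw [hsplit1, hsplit2, h1, h2]
  · -- i in u, i+1 in v
    obtain ⟨hiu, _⟩ := mem_left_of_indexOf_lt hi hp
    obtain ⟨hi1v, _⟩ := mem_right_of_indexOf_gt hmu hi1 hq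
    have hi1u : i + 1 ∉ u := fun hc => hdis hc (by simp [hi1v])
    have hiv : i ∉ v := fun hc => hdis hiu (by simp [hc])
    rw [hsplit1, hsplit2, shape_map_swap_of_not_mem_left i u hi1u,
      shape_map_swap_of_not_mem_right i v hiv]
  · -- i+1 in u, i in v
    obtain ⟨hi1u, _⟩ := mem_left_of_indexOf_lt hi1 hq
    obtain ⟨hiv, _⟩ := mem_right_of_indexOf_gt hmu hi hp
    have hiu : i ∉ u := fun hc => hdis hc (by simp [hiv])
    have hi1v : i + 1 ∉ v := fun hc => hdis hi1u (by simp [hc])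
    rw [hsplit1, hsplit2, shape_map_swap_of_not_mem_left i v hi1v,
      shape_map_swap_of_not_mem_right i u hiu]
  · -- both in v
    obtain ⟨hiv, hpi⟩ := mem_right_of_indexOf_gt hmu hi hp
    obtain ⟨hi1v, hqi⟩ := mem_right_of_indexOf_gt hmu hi1 hq
    have hwgt' : u.length < List.idxOf w (u ++ m :: v) := by omega
    obtain ⟨hwv, hri⟩ := mem_right_of_indexOf_gt hmu hw hwgt'
    have happ : ToggleApplies i v := ⟨w, hwv, hwgt, by omega, by omega⟩
    have h1 : shape (v.map (swapFun i)) = shape v := IH v.length hlv v i rfl hnv happ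
    have h2 : u.map (swapFun i) = u := by
      have : ∀ x ∈ u, swapFun i x = x := by
        intro x hx
        have hxi : x ≠ i := fun he => hdis hx (by simp; exact Or.inr (he ▸ hiv))
        have hxi1 : x ≠ i + 1 := fun he => hdis hx (by simp; exact Or.inr (he ▸ hi1v))
        unfold swapFun; split_ifs <;> omega
      rw [List.map_congr_left this, List.map_id']
    rw [hsplit1, hsplit2, h1, h2]

lemma swapEntries_invol (i : ℕ) (l : List ℕ) : swapEntries i (swapEntries i l) = l := by
  rw [swapEntries_eq_map, swapEntries_eq_map, List.map_map]
  have : ∀ x ∈ l, (swapFun i ∘ swapFun i) x = x := fun x _ => swapFun_invol i x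
  rw [List.map_congr_left this, List.map_id']

lemma mem_permList {n : ℕ} {l : List ℕ} (h : IsPermList n l) (x : ℕ) :
    x ∈ l ↔ 1 ≤ x ∧ x < n + 1 := by
  rw [h.mem_iff, List.mem_range'_1]
  omega

lemma permList_nodup {n : ℕ} {l : List ℕ} (h : IsPermList n l) : l.Nodup :=
  h.nodup_iff.mpr (List.nodup_range')

lemma swapEntries_perm_of_mem {i : ℕ} {l : List ℕ} (hl : l.Nodup) (hi : i ∈ l)
    (hi1 : i + 1 ∈ l) : (swapEntries i l).Perm l := by
  rw [swapEntries_eq_map]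
  apply List.perm_of_nodup_nodup_toFinset_eq (hl.map (swapFun_inj i)) hl
  ext x
  simp only [List.mem_toFinset, List.mem_map]
  constructor
  · rintro ⟨y, hy, rfl⟩
    unfold swapFun; split_ifs with h1 h2
    · exact hi1
    · exact hi
    · exact hy
  · intro hx
    by_cases h1 : x = i
    · exact ⟨i + 1, hi1, by unfold swapFun; split_ifs <;> omega⟩
    by_cases h2 : x = i + 1
    · exact ⟨i, hi, by unfold swapFun; split_ifs <;> omega⟩
    · exact ⟨x, hx, by unfold swapFun; split_ifs <;> omega⟩

lemma toggle_eq_or (i : ℕ) (l : List ℕ) :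
    toggle i l = l ∨ (ToggleApplies i l ∧ toggle i l = swapEntries i l) := by
  unfold toggle; split_ifs with h
  · exact Or.inr ⟨h, rfl⟩
  · exact Or.inl rfl

lemma step_inv {n : ℕ} {x y : List ℕ} (h : ToggleStep n x y) :
    (IsPermList n x ↔ IsPermList n y) ∧ (x.Nodup ↔ y.Nodup) ∧
      (x.Nodup → shape x = shape y) := by
  obtain ⟨i, hi1, hin, rfl⟩ := h
  rcases toggle_eq_or i x with he | ⟨ha, he⟩
  · rw [he]; exact ⟨Iff.rfl, Iff.rfl, fun _ => rfl⟩
  rw [he]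
  have hxy : x = swapEntries i (swapEntries i x) := (swapEntries_invol i x).symm
  have hnodup : x.Nodup ↔ (swapEntries i x).Nodup := by
    constructor
    · intro hx; exact hx.map (swapFun_inj i)
    · intro hy; rw [hxy]; exact hy.map (swapFun_inj i)
  refine ⟨?_, hnodup, ?_⟩
  · constructor
    · intro hx
      have hn2 : 2 ≤ n := by omega
      have hix : i ∈ x := (mem_permList hx i).mpr (by omega)
      have hi1x : i + 1 ∈ x := (mem_permList hx (i+1)).mpr (by omega)
      exact (swapEntries_perm_of_mem (permList_nodup hx) hix hi1x).trans hx
    · intro hy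
      have hn2 : 2 ≤ n := by omega
      have hiy : i ∈ swapEntries i x := (mem_permList hy i).mpr (by omega)
      have hi1y : i + 1 ∈ swapEntries i x := (mem_permList hy (i+1)).mpr (by omega)
      have := (swapEntries_perm_of_mem (permList_nodup hy) hiy hi1y).trans hy
      rwa [← hxy] at this
  · intro hx
    exact (shape_swapEntries x.length x i rfl hx ha).symm

lemma orbit_inv {n : ℕ} {x y : List ℕ} (h : OrbitRel n x y) :
    (IsPermList n x ↔ IsPermList n y) ∧ (x.Nodup ↔ y.Nodup) ∧
      (x.Nodup → shape x = shape y) := by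
  induction h with
  | rel a b hab => exact step_inv hab
  | refl a => exact ⟨Iff.rfl, Iff.rfl, fun _ => rfl⟩
  | symm a b _ IH =>
    exact ⟨IH.1.symm, IH.2.1.symm, fun hb => (IH.2.2 (IH.2.1.mpr hb)).symm⟩
  | trans a b c _ _ IH1 IH2 =>
    exact ⟨IH1.1.trans IH2.1, IH1.2.1.trans IH2.2.1,
      fun ha => (IH1.2.2 ha).trans (IH2.2.2 (IH1.2.1.mp ha))⟩

def Reach (n : ℕ) : List ℕ → List ℕ → Prop := Relation.ReflTransGen (ToggleStep n)

lemma Reach.orbit {n : ℕ} {x y : List ℕ} (h : Reach n x y) : OrbitRel n x y := by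
  induction h with
  | refl => exact Relation.EqvGen.refl x
  | tail _ hstep IH => exact Relation.EqvGen.trans _ _ _ IH (Relation.EqvGen.rel _ _ hstep)

lemma Reach.perm {n : ℕ} {x y : List ℕ} (h : Reach n x y) (hx : IsPermList n x) :
    IsPermList n y := (orbit_inv h.orbit).1.mp hx

def canon : BinaryTree Unit → List ℕ
  | BinaryTree.nil => []
  | BinaryTree.node _ t1 t2 =>
      canon t1 ++ (t1.numNodes + t2.numNodes + 1) :: (canon t2).map (· + t1.numNodes)

lemma canon_perm (t : BinaryTree Unit) : IsPermList t.numNodes (canon t) := by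
  induction t with
  | nil => exact List.Perm.refl _
  | node _ t1 t2 IH1 IH2 =>
    unfold IsPermList at *
    set a := t1.numNodes with ha
    set b := t2.numNodes with hb
    have e2 : ((canon t2).map (· + a)).Perm (List.range' (a + 1) b) := by
      refine (IH2.map (· + a)).trans ?_
      have h1 : (List.range' 1 b).map (· + a) = (List.range' 1 b).map (fun x => a + x) := by
        apply List.map_congr_left; intro x _; omega
      rw [h1, List.map_add_range']
    have step1 : (canon (BinaryTree.node () t1 t2)).Perm
        (List.range' 1 a ++ ((a + b + 1) :: List.range' (a + 1) b)) := by
      show (canon t1 ++ (a + b + 1) :: (canon t2).map (· + a)).Perm _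
      exact IH1.append (e2.cons _)
    have step2 : (List.range' 1 a ++ ((a + b + 1) :: List.range' (a + 1) b)).Perm
        (List.range' 1 a ++ (List.range' (a + 1) b ++ [a + b + 1])) :=
      List.Perm.append_left _ ((List.perm_append_singleton _ _).symm)
    have step3 : List.range' 1 a ++ (List.range' (a + 1) b ++ [a + b + 1])
        = List.range' 1 (BinaryTree.node () t1 t2).numNodes := by
      have h1 : List.range' (a + 1) b ++ [a + b + 1] = List.range' (a + 1) (b + 1) := by
        have := List.range'_concat (step := 1) (s := a + 1) (n := b)
        rw [this]
        congr 1
        · simp; omega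
      rw [h1]
      have h2 := List.range'_append (s := 1) (m := a) (n := b + 1) (step := 1)
      simp only [one_mul] at h2
      rw [show a + 1 = 1 + a by omega, h2]
      congr 1
    exact step1.trans (step2.trans (by rw [step3]))

lemma canon_length (t : BinaryTree Unit) : (canon t).length = t.numNodes :=
  (canon_perm t).length_eq.trans (by simp)

lemma shape_map_add (a : ℕ) (l : List ℕ) : shape (l.map (· + a)) = shape l := by
  apply shape_map_iso
  intro x _ y _
  omega

lemma canon_shape (t : BinaryTree Unit) : shape (canon t) = t := by
  induction t with
  | nil => simp [canon]
  | node u t1 t2 IH1 IH2 =>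
    obtain rfl : u = () := rfl
    show shape (canon t1 ++ (t1.numNodes + t2.numNodes + 1) :: (canon t2).map (· + t1.numNodes)) = _
    rw [shape_split, IH1, shape_map_add, IH2]
    · intro x hx
      have := (mem_permList (canon_perm t1) x).mp hx
      omega
    · intro x hx
      obtain ⟨y, hy, rfl⟩ := List.mem_map.mp hx
      have := (mem_permList (canon_perm t2) y).mp hy
      omega

lemma toggle_append_left {a i : ℕ} {u v : List ℕ} {m : ℕ}
    (hu : IsPermList a u) (hi1 : 1 ≤ i) (hia : i ≤ a - 1)
    (hv : ∀ x ∈ v, a < x) (hm : a < m) :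
    toggle i (u ++ m :: v) = toggle i u ++ m :: v := by
  have ha2 : 2 ≤ a := by omega
  have hiu : i ∈ u := (mem_permList hu i).mpr (by omega)
  have hi1u : i + 1 ∈ u := (mem_permList hu (i+1)).mpr (by omega)
  have hidx1 : List.idxOf i (u ++ m :: v) = List.idxOf i u :=
    List.idxOf_append_of_mem hiu
  have hidx2 : List.idxOf (i+1) (u ++ m :: v) = List.idxOf (i+1) u :=
    List.idxOf_append_of_mem hi1u
  have hlen1 : List.idxOf i u < u.length := List.idxOf_lt_length_iff.mpr hiu
  have hlen2 : List.idxOf (i+1) u < u.length := List.idxOf_lt_length_iff.mpr hi1u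
  have happ : ToggleApplies i (u ++ m :: v) ↔ ToggleApplies i u := by
    constructor
    · rintro ⟨w, hw, hgt, h1, h2⟩
      rw [hidx1, hidx2] at h1 h2
      have hwlt : List.idxOf w (u ++ m :: v) < u.length := by omega
      obtain ⟨hwu, hwi⟩ := mem_left_of_indexOf_lt hw hwlt
      exact ⟨w, hwu, hgt, by omega, by omega⟩
    · rintro ⟨w, hw, hgt, h1, h2⟩
      refine ⟨w, by simp [hw], hgt, ?_, ?_⟩ <;>
        rw [hidx1, hidx2, List.idxOf_append_of_mem hw] <;> omega
  have hfv : ∀ x ∈ m :: v, swapFun i x = x := by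
    intro x hx
    have : a < x := by
      rcases List.mem_cons.mp hx with h | h
      · omega
      · exact hv x h
    unfold swapFun; split_ifs <;> omega
  unfold toggle
  split_ifs with h1 h2 h2
  · rw [swapEntries_eq_map, swapEntries_eq_map, List.map_append, List.map_congr_left hfv,
      List.map_id']
  · exact absurd (happ.mp h1) h2
  · exact absurd (happ.mpr h2) h1
  · rfl

lemma reach_append_left {a n : ℕ} (han : a < n) {m : ℕ} {v : List ℕ}
    (hv : ∀ x ∈ v, a < x) (hm : a < m) {u u' : List ℕ}
    (h : Reach a u u') (hu : IsPermList a u) :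
    Reach n (u ++ m :: v) (u' ++ m :: v) := by
  induction h with
  | refl => exact Relation.ReflTransGen.refl
  | @tail y z hyz hstep IH =>
    have hy : IsPermList a y := Reach.perm hyz hu
    obtain ⟨i, hi1, hia, rfl⟩ := hstep
    exact IH.tail ⟨i, hi1, by omega, (toggle_append_left hy hi1 hia hv hm).symm⟩

lemma toggle_append_right {a b n j : ℕ} {u w : List ℕ}
    (hn : n = a + b + 1) (hu : IsPermList a u) (hw : IsPermList b w)
    (hj1 : 1 ≤ j) (hjb : j ≤ b - 1) :
    toggle (j + a) (u ++ n :: w.map (· + a)) = u ++ n :: (toggle j w).map (· + a) := by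
  have hb2 : 2 ≤ b := by omega
  have hjw : j ∈ w := (mem_permList hw j).mpr (by omega)
  have hj1w : j + 1 ∈ w := (mem_permList hw (j+1)).mpr (by omega)
  have hnu : n ∉ u := fun hc => by have := (mem_permList hu n).mp hc; omega
  have hju : j + a ∉ u := fun hc => by have := (mem_permList hu (j+a)).mp hc; omega
  have hj1u : j + a + 1 ∉ u := fun hc => by have := (mem_permList hu (j+a+1)).mp hc; omega
  have hjn : j + a ≠ n := by omega
  have hj1n : j + a + 1 ≠ n := by omega
  have hinj : ∀ c : ℕ, ∀ x ∈ w, x + a = c + a → x = c := fun c x _ h => by omega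
  have hidxm : ∀ c : ℕ, c ∈ w → List.idxOf (c + a) (w.map (· + a)) = List.idxOf c w := by
    intro c hc
    exact indexOf_map_of_inj (· + a) w c (hinj c)
  have hidx1 : List.idxOf (j + a) (u ++ n :: w.map (· + a))
      = u.length + 1 + List.idxOf j w := by
    rw [indexOf_right_of hju hjn, hidxm j hjw]
  have hidx2 : List.idxOf (j + a + 1) (u ++ n :: w.map (· + a))
      = u.length + 1 + List.idxOf (j + 1) w := by
    rw [indexOf_right_of hj1u hj1n]
    have : j + a + 1 = (j + 1) + a := by omega
    rw [this, hidxm (j+1) hj1w]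
  have hlen1 : List.idxOf j w < w.length := List.idxOf_lt_length_iff.mpr hjw
  have hlen2 : List.idxOf (j+1) w < w.length := List.idxOf_lt_length_iff.mpr hj1w
  have happ : ToggleApplies (j + a) (u ++ n :: w.map (· + a)) ↔ ToggleApplies j w := by
    constructor
    · rintro ⟨ξ, hξ, hgt, h1, h2⟩
      rw [hidx1, hidx2] at h1 h2
      have hgtlen : u.length < List.idxOf ξ (u ++ n :: w.map (· + a)) := by omega
      obtain ⟨hξv, hξi⟩ := mem_right_of_indexOf_gt hnu hξ hgtlen
      obtain ⟨s, hs, rfl⟩ := List.mem_map.mp hξv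
      rw [hidxm s hs] at hξi
      exact ⟨s, hs, by omega, by omega, by omega⟩
    · rintro ⟨s, hs, hgt, h1, h2⟩
      refine ⟨s + a, by
        rw [List.mem_append]
        exact Or.inr (List.mem_cons.mpr (Or.inr (List.mem_map.mpr ⟨s, hs, rfl⟩))), by omega, ?_, ?_⟩ <;>
        rw [hidx1, hidx2, indexOf_right_of
          (fun hc => by have := (mem_permList hu (s+a)).mp hc; have := (mem_permList hw s).mp hs; omega)
          (by have := (mem_permList hw s).mp hs; omega), hidxm s hs] <;> omega
  have hmapeq : (u ++ n :: w.map (· + a)).map (swapFun (j + a))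
      = u ++ n :: (w.map (swapFun j)).map (· + a) := by
    rw [List.map_append, List.map_cons]
    congr 1
    · apply List.map_congr_left ?_ |>.trans (List.map_id' u)
      intro x hx
      have := (mem_permList hu x).mp hx
      unfold swapFun; split_ifs <;> omega
    · congr 1
      · unfold swapFun; split_ifs <;> omega
      · rw [List.map_map, List.map_map]
        apply List.map_congr_left
        intro s _
        show swapFun (j + a) (s + a) = swapFun j s + a
        unfold swapFun; split_ifs <;> omega
  unfold toggle
  split_ifs with h1 h2 h2
  · rw [swapEntries_eq_map, swapEntries_eq_map, hmapeq]
  · exact absurd (happ.mp h1) h2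
  · exact absurd (happ.mpr h2) h1
  · rfl

lemma reach_append_right {a b n : ℕ} (hn : n = a + b + 1) {u : List ℕ}
    (hu : IsPermList a u) {w w' : List ℕ}
    (h : Reach b w w') (hw : IsPermList b w) :
    Reach n (u ++ n :: w.map (· + a)) (u ++ n :: w'.map (· + a)) := by
  induction h with
  | refl => exact Relation.ReflTransGen.refl
  | @tail y z hyz hstep IH =>
    have hy : IsPermList b y := Reach.perm hyz hw
    obtain ⟨j, hj1, hjb, rfl⟩ := hstep
    exact IH.tail ⟨j + a, by omega, by omega, (toggle_append_right hn hu hy hj1 hjb).symm⟩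

lemma sort_left {n : ℕ} : ∀ (S : ℕ), ∀ (u v : List ℕ), u.sum = S →
    IsPermList n (u ++ n :: v) →
    ∃ u1 v1, Reach n (u ++ n :: v) (u1 ++ n :: v1) ∧ u1.length = u.length ∧
      v1.length = v.length ∧ IsPermList u.length u1 ∧ shape u1 = shape u ∧
      shape v1 = shape v := by
  intro S
  induction S using Nat.strong_induction_on with
  | _ S IH =>
  intro u v hS hl
  have hnodup := permList_nodup hl
  have hnu : n ∉ u := fun hc =>
    (List.nodup_append.mp hnodup).2.2 n hc n List.mem_cons_self rfl
  have hnv : n ∉ v :=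
    (List.nodup_cons.mp (List.nodup_append.mp hnodup).2.1).1
  have hdis : u.Disjoint (n :: v) := by
    intro x hx hx'; exact (List.nodup_append.mp hnodup).2.2 x hx x hx' rfl
  have hbound : ∀ x ∈ u ++ n :: v, 1 ≤ x ∧ x < n + 1 := fun x hx => (mem_permList hl x).mp hx
  by_cases hex : ∃ j, 1 ≤ j ∧ j + 1 ∈ u ∧ j ∈ v
  · obtain ⟨j, hj1, hju, hjv⟩ := hex
    have hjb : 1 ≤ j + 1 ∧ j + 1 < n + 1 := hbound (j+1) (by simp [hju])
    have hj1n : j + 1 ≠ n := fun he => hnu (he ▸ hju)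
    have hjn : j + 1 < n := by omega
    have hjnotu : j ∉ u := fun hc => hdis hc (by simp [hjv])
    have hj1notv : j + 1 ∉ v := fun hc => hdis hju (by simp [hc])
    have hidx1 : List.idxOf (j+1) (u ++ n :: v) = List.idxOf (j+1) u :=
      List.idxOf_append_of_mem hju
    have hidx2 : List.idxOf j (u ++ n :: v) = u.length + 1 + List.idxOf j v :=
      indexOf_right_of hjnotu (by omega)
    have hidxn : List.idxOf n (u ++ n :: v) = u.length := indexOf_mid hnu
    have hlen1 : List.idxOf (j+1) u < u.length := List.idxOf_lt_length_iff.mpr hju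
    have happ : ToggleApplies j (u ++ n :: v) := by
      refine ⟨n, by simp, by omega, ?_, ?_⟩ <;> rw [hidx1, hidx2, hidxn] <;> omega
    have hstep : ToggleStep n (u ++ n :: v) (swapEntries j (u ++ n :: v)) :=
      ⟨j, hj1, by omega, by unfold toggle; rw [if_pos happ]⟩
    have hfn : swapFun j n = n := by unfold swapFun; split_ifs <;> omega
    have hmap : swapEntries j (u ++ n :: v)
        = (u.map (swapFun j)) ++ n :: (v.map (swapFun j)) := by
      rw [swapEntries_eq_map, List.map_append, List.map_cons, hfn]
    have hperm' : IsPermList n ((u.map (swapFun j)) ++ n :: (v.map (swapFun j))) := by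
      rw [← hmap]; exact (step_inv hstep).1.mp hl
    have hsum : (u.map (swapFun j)).sum < u.sum := by
      have h1 : (u.map (swapFun j)).sum < (u.map id).sum := by
        apply List.sum_lt_sum
        · intro x hx
          have hxj : x ≠ j := fun he => hjnotu (he ▸ hx)
          simp only [id]
          unfold swapFun; split_ifs <;> omega
        · refine ⟨j + 1, hju, ?_⟩
          simp only [id]
          unfold swapFun; split_ifs <;> omega
      rwa [List.map_id] at h1
    obtain ⟨u1, v1, hreach, hl1, hl2, hp1, hs1, hs2⟩ :=
      IH (u.map (swapFun j)).sum (by omega) (u.map (swapFun j)) (v.map (swapFun j)) rfl hperm'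
    refine ⟨u1, v1, Relation.ReflTransGen.head hstep (hmap ▸ hreach), ?_, ?_, ?_, ?_, ?_⟩
    · rw [hl1, List.length_map]
    · rw [hl2, List.length_map]
    · rwa [List.length_map] at hp1
    · rw [hs1]; exact shape_map_swap_of_not_mem_right j u hjnotu
    · rw [hs2]; exact shape_map_swap_of_not_mem_left j v hj1notv
  · -- u is an initial segment already
    push_neg at hex
    have hnd : u.Nodup := (List.nodup_append.mp hnodup).1
    have hu : IsPermList u.length u := by
      rcases eq_or_ne u [] with rfl | hune
      · simp [IsPermList]
      · have hstep1 : ∀ x ∈ u, 2 ≤ x → x - 1 ∈ u := by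
          intro x hxu hx2
          have hxn : x < n := by
            have h1 := (hbound x (by simp [hxu])).2
            have h2 : x ≠ n := fun he => hnu (he ▸ hxu)
            omega
          have hx1l : x - 1 ∈ u ++ n :: v := by
            rw [mem_permList hl]
            omega
          rcases List.mem_append.mp hx1l with h | h
          · exact h
          · rcases List.mem_cons.mp h with h | h
            · omega
            · exfalso
              have hx1 : x - 1 + 1 = x := by omega
              exact hex (x-1) (by omega) (hx1 ▸ hxu) h
        have hdown : ∀ d x, x ∈ u → ∀ k, 1 ≤ k → k + d = x → k ∈ u := by
          intro d
          induction d with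
          | zero =>
            intro x hx k _ hkd
            have : k = x := by omega
            exact this ▸ hx
          | succ d IHd =>
            intro x hx k hk1 hkd
            exact IHd (x-1) (hstep1 x hx (by omega)) k hk1 (by omega)
        obtain ⟨M, hM⟩ : ∃ M, u.max? = some M := by
          cases hh : u.max? with
          | none => exact absurd (List.max?_eq_none_iff.mp hh) hune
          | some M => exact ⟨M, rfl⟩
        obtain ⟨hMmem, hMub⟩ := nat_max?_eq_some_iff.mp hM
        have hfin : u.toFinset = Finset.Icc 1 M := by
          ext x
          simp only [List.mem_toFinset, Finset.mem_Icc]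
          constructor
          · intro hx
            exact ⟨(hbound x (by simp [hx])).1, hMub x hx⟩
          · rintro ⟨h1, h2⟩
            exact hdown (M - x) M hMmem x h1 (by omega)
        have hcard : u.toFinset.card = u.length := List.toFinset_card_of_nodup hnd
        have hMa : M = u.length := by
          rw [hfin] at hcard
          rw [Nat.card_Icc] at hcard
          omega
        apply List.perm_of_nodup_nodup_toFinset_eq hnd (List.nodup_range')
        rw [hfin, hMa]
        ext x
        simp only [List.mem_toFinset, Finset.mem_Icc, List.mem_range'_1]
        omega
    exact ⟨u, v, Relation.ReflTransGen.refl, rfl, rfl, hu, rfl, rfl⟩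

lemma right_part {n a b : ℕ} {u v : List ℕ} (hn : n = a + b + 1)
    (ha : u.length = a) (hb : v.length = b)
    (hl : IsPermList n (u ++ n :: v)) (hu : IsPermList a u) :
    IsPermList b (v.map (· - a)) ∧ (∀ x ∈ v, a < x) ∧
      v.map (fun x => x - a + a) = v := by
  have h1 : List.range' 1 n = List.range' 1 a ++ List.range' (1 + a) (b + 1) := by
    have h2 := List.range'_append (s := 1) (m := a) (n := b + 1) (step := 1)
    simp only [one_mul] at h2
    rw [hn, show a + b + 1 = a + (b + 1) from by omega, ← h2]
  have h3 : (u ++ n :: v).Perm (u ++ List.range' (1 + a) (b + 1)) := by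
    refine hl.trans ?_
    rw [h1]
    exact hu.symm.append (List.Perm.refl _)
  have h4 : (n :: v).Perm (List.range' (1 + a) (b + 1)) :=
    (List.perm_append_left_iff u).mp h3
  have h5 : List.range' (1 + a) (b + 1) = List.range' (1 + a) b ++ [n] := by
    rw [List.range'_concat]
    congr 2
    simp
    omega
  have h6 : (n :: v).Perm (n :: List.range' (1 + a) b) := by
    rw [h5] at h4
    exact h4.trans (List.perm_append_singleton _ _)
  have h7 : v.Perm (List.range' (1 + a) b) := h6.cons_inv
  have hmem : ∀ x ∈ v, a < x := by
    intro x hx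
    have := h7.mem_iff.mp hx
    rw [List.mem_range'_1] at this
    omega
  refine ⟨?_, hmem, ?_⟩
  · unfold IsPermList
    refine (h7.map (· - a)).trans ?_
    have : (List.range' (1 + a) b).map (· - a) = List.range' 1 b := by
      have he : List.range' (1 + a) b = (List.range' 1 b).map (fun x => a + x) := by
        rw [List.map_add_range', Nat.add_comm 1 a]
      rw [he, List.map_map]
      refine (List.map_congr_left ?_).trans (List.map_id' _)
      intro x _
      simp
    rw [this]
  · refine (List.map_congr_left ?_).trans (List.map_id' _)
    intro x hx
    have := hmem x hx
    omega

lemma reach_canon : ∀ (n : ℕ) (l : List ℕ), IsPermList n l → Reach n l (canon (shape l)) := by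
  intro n
  induction n using Nat.strong_induction_on with
  | _ n IHn =>
  intro l hl
  rcases Nat.eq_zero_or_pos n with rfl | hn
  · have : l = [] := List.Perm.eq_nil (by simpa [IsPermList] using hl)
    subst this
    simp only [shape_nil]
    exact Relation.ReflTransGen.refl
  -- decompose at n
  have hnl : n ∈ l := (mem_permList hl n).mpr (by omega)
  obtain ⟨u, v, rfl⟩ := List.append_of_mem hnl
  have hnodup := permList_nodup hl
  have hnu : n ∉ u := fun hc =>
    (List.nodup_append.mp hnodup).2.2 n hc n List.mem_cons_self rfl
  have hnv : n ∉ v :=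
    (List.nodup_cons.mp (List.nodup_append.mp hnodup).2.1).1
  set a := u.length with hadef
  set b := v.length with hbdef
  have hn2 : n = a + b + 1 := by
    have := hl.length_eq
    simp at this
    omega
  have hxu : ∀ x ∈ u, x < n := by
    intro x hx
    have h1 := (mem_permList hl x).mp (by simp [hx])
    have h2 : x ≠ n := fun he => hnu (he ▸ hx)
    omega
  have hxv : ∀ x ∈ v, x < n := by
    intro x hx
    have h1 := (mem_permList hl x).mp (by simp [hx])
    have h2 : x ≠ n := fun he => hnv (he ▸ hx)
    omega
  have hsplit : shape (u ++ n :: v) = BinaryTree.node () (shape u) (shape v) := shape_split hxu hxv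
  -- step A : sort values
  obtain ⟨u1, v1, hreach1, hl1, hl2, hp1, hs1, hs2⟩ := sort_left u.sum u v rfl hl
  have hlA : IsPermList n (u1 ++ n :: v1) := Reach.perm hreach1 hl
  rw [← hadef] at hp1
  obtain ⟨hw1perm, hv1big, hv1eq⟩ := right_part hn2 hl1 (hl2.trans rfl) hlA hp1
  -- step B : recurse on the left part
  have hreachB : Reach n (u1 ++ n :: v1) (canon (shape u1) ++ n :: v1) :=
    reach_append_left (by omega) hv1big (by omega) (IHn a (by omega) u1 hp1) hp1
  -- step C : recurse on the right part
  set w1 := v1.map (· - a) with hw1def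
  have hv1w : v1 = w1.map (· + a) := by
    rw [hw1def, List.map_map]
    exact hv1eq.symm
  have hcanperm : IsPermList a (canon (shape u1)) := by
    have := canon_perm (shape u1)
    rwa [numNodes_shape, hl1] at this
  have hreachC : Reach n (canon (shape u1) ++ n :: w1.map (· + a))
      (canon (shape u1) ++ n :: (canon (shape w1)).map (· + a)) :=
    reach_append_right hn2 hcanperm (IHn b (by omega) w1 hw1perm) hw1perm
  -- assemble
  have hshapew1 : shape w1 = shape v1 := by
    rw [hv1w, shape_map_add]
  have canon_node : ∀ t1 t2 : BinaryTree Unit, canon (BinaryTree.node () t1 t2)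
      = canon t1 ++ (t1.numNodes + t2.numNodes + 1) :: (canon t2).map (· + t1.numNodes) :=
    fun _ _ => rfl
  have hw1len : w1.length = b := by
    rw [hw1def, List.length_map, hl2]
  have hfinal : canon (shape u1) ++ n :: (canon (shape w1)).map (· + a)
      = canon (shape (u ++ n :: v)) := by
    rw [hsplit, ← hs1, ← hs2, ← hshapew1, canon_node,
      numNodes_shape, numNodes_shape, hl1, ← hadef, hw1len, ← hn2]
  refine hreach1.trans (hreachB.trans ?_)
  rw [hv1w, ← hfinal]
  exact hreachC

noncomputable def orbitEquiv (n : ℕ) :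
    Quotient (orbitSetoid n) ≃ {t : BinaryTree Unit // t.numNodes = n} where
  toFun := Quotient.lift
    (fun x : {l : List ℕ // IsPermList n l} =>
      (⟨shape x.1, by rw [numNodes_shape]; exact x.2.length_eq.trans (by simp)⟩ :
        {t : BinaryTree Unit // t.numNodes = n}))
    (by
      intro x y h
      have h' : OrbitRel n x.1 y.1 := h
      exact Subtype.ext ((orbit_inv h').2.2 (permList_nodup x.2)))
  invFun := fun t => Quotient.mk _
    ⟨canon t.1, by have := canon_perm t.1; rwa [t.2] at this⟩
  left_inv := by
    intro q
    induction q using Quotient.inductionOn with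
    | _ x =>
      apply Quotient.sound
      show OrbitRel n _ _
      exact ((reach_canon n x.1 x.2).orbit).symm _ _
  right_inv := by
    intro t
    exact Subtype.ext (canon_shape t.1)

/-- The number of orbits of the polyurethane group `𝒫ₙ` acting on `Sₙ` is the `n`-th
Catalan number. -/
theorem card_orbits_eq_catalan (n : ℕ) :
    Nat.card (Quotient (orbitSetoid n)) = catalan n := by
  rw [Nat.card_congr (orbitEquiv n)]
  rw [Nat.card_congr (Equiv.subtypeEquivRight
    (fun t : BinaryTree Unit => (BinaryTree.mem_treesOfNumNodesEq (x := t) (n := n)).symm))]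
  rw [Nat.card_eq_finsetCard]
  exact BinaryTree.treesOfNumNodesEq_card_eq_catalan n
end

section
/- Every orbit of the polyurethane group 𝒫_n acting on S_n contains exactly one 231-avoiding permutation and exactly one 132-avoiding permutation. -/
namespace Poly

/-- the function underlying `swapEntries` -/
def sf (i : ℕ) (x : ℕ) : ℕ := if x = i then i + 1 else if x = i + 1 then i else x

theorem swapEntries_eq_map (i : ℕ) (l : List ℕ) : swapEntries i l = l.map (sf i) := rfl

theorem sf_eq_self {i x : ℕ} (h1 : x ≠ i) (h2 : x ≠ i + 1) : sf i x = x := by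
  simp [sf, h1, h2]

theorem sf_i (i : ℕ) : sf i i = i + 1 := by simp [sf]

theorem sf_i1 (i : ℕ) : sf i (i+1) = i := by simp [sf]

theorem sf_sf (i x : ℕ) : sf i (sf i x) = x := by
  unfold sf
  by_cases h1 : x = i
  · simp [h1]
  · by_cases h2 : x = i + 1 <;> simp [h1, h2]

theorem sf_eq_iff_of_gt {i a : ℕ} (ha : i + 1 < a) (x : ℕ) : sf i x = a ↔ x = a := by
  unfold sf
  by_cases h1 : x = i
  · simp [h1]; omega
  · by_cases h2 : x = i + 1 <;> simp [h1, h2]; omega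

theorem indexOf_map {f : ℕ → ℕ} {v w : ℕ} (hf : ∀ x, f x = v ↔ x = w) (l : List ℕ) :
    (l.map f).idxOf v = l.idxOf w := by
  induction l with
  | nil => rfl
  | cons a t ih =>
      by_cases h : a = w
      · simp [h, List.idxOf_cons, (hf w).2 rfl]
      · have : f a ≠ v := fun hh => h ((hf a).1 hh)
        simp [List.idxOf_cons, this, h, ih]

theorem indexOf_map_mem {f : ℕ → ℕ} {v w : ℕ} {l : List ℕ}
    (hf : ∀ x ∈ l, (f x = v ↔ x = w)) (hfw : f w = v) :
    (l.map f).idxOf v = l.idxOf w := by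
  induction l with
  | nil => rfl
  | cons a t ih =>
      by_cases h : a = w
      · simp [h, List.idxOf_cons, hfw]
      · have : f a ≠ v := fun hh => h ((hf a (by simp)).1 hh)
        simp [List.idxOf_cons, this, h, ih (fun x hx => hf x (by simp [hx]))]

theorem mem_of_indexOf_lt {l₁ l₂ : List ℕ} {v : ℕ} (h : (l₁ ++ l₂).idxOf v < l₁.length) :
    v ∈ l₁ := by
  by_contra hv
  rw [List.idxOf_append_of_notMem hv] at h
  omega

/-- max entry of a list -/
def mx (l : List ℕ) : ℕ := l.foldr max 0

theorem le_mx {l : List ℕ} {x : ℕ} (h : x ∈ l) : x ≤ mx l := by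
  induction l with
  | nil => simp at h
  | cons a t ih =>
      rcases List.mem_cons.1 h with h | h
      · simp only [mx, List.foldr_cons]; omega
      · have := ih h
        simp only [mx, List.foldr_cons] at *
        omega

theorem mx_mem {l : List ℕ} (h : l ≠ []) : mx l ∈ l := by
  induction l with
  | nil => simp at h
  | cons a t ih =>
      rcases eq_or_ne t [] with ht | ht
      · simp [ht, mx]
      · have := ih ht
        simp only [mx, List.foldr_cons] at this ⊢
        rcases Nat.le_total a (List.foldr max 0 t) with hle | hle
        · rw [max_eq_right hle]; exact List.mem_cons_of_mem _ this
        · rw [max_eq_left hle]; exact List.mem_cons_self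

theorem mx_eq {l : List ℕ} {M : ℕ} (hM : M ∈ l) (h : ∀ x ∈ l, x ≤ M) : mx l = M :=
  le_antisymm (by
    rcases eq_or_ne l [] with h0 | h0
    · subst h0; simp at hM
    · exact h _ (mx_mem h0)) (le_mx hM)

theorem decomp (l : List ℕ) {M : ℕ} (hM : M ∈ l) :
    l = l.take (l.idxOf M) ++ M :: l.drop (l.idxOf M + 1) := by
  have h1 : l.idxOf M < l.length := List.idxOf_lt_length_iff.2 hM
  conv_lhs => rw [← List.take_append_drop (l.idxOf M) l]
  rw [← List.getElem_cons_drop h1, List.getElem_idxOf]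

end Poly
namespace Poly

theorem sf_eq_i_iff (i x : ℕ) : sf i x = i ↔ x = i + 1 := by
  unfold sf
  by_cases h1 : x = i
  · simp [h1]
  · by_cases h2 : x = i + 1 <;> simp [h1, h2]

theorem sf_eq_i1_iff (i x : ℕ) : sf i x = i + 1 ↔ x = i := by
  unfold sf
  by_cases h1 : x = i
  · simp [h1]
  · by_cases h2 : x = i + 1 <;> simp [h1, h2]

theorem map_sf_eq_self {i : ℕ} {z : List ℕ} (h1 : i ∉ z) (h2 : i + 1 ∉ z) :
    z.map (sf i) = z := by
  have h : ∀ a ∈ z, sf i a = id a := fun a ha =>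
    sf_eq_self (fun e => h1 (e ▸ ha)) (fun e => h2 (e ▸ ha))
  rw [List.map_congr_left h, List.map_id]

theorem toggle_pos {i : ℕ} {l : List ℕ} (h : ToggleApplies i l) :
    toggle i l = swapEntries i l := if_pos h

theorem toggle_neg {i : ℕ} {l : List ℕ} (h : ¬ ToggleApplies i l) :
    toggle i l = l := if_neg h

theorem toggleApplies_append_left {i : ℕ} {x z : List ℕ}
    (hi : i ∈ x) (hi1 : i + 1 ∈ x) : ToggleApplies i (x ++ z) ↔ ToggleApplies i x := by
  have e1 : (x ++ z).idxOf i = x.idxOf i := List.idxOf_append_of_mem hi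
  have e2 : (x ++ z).idxOf (i+1) = x.idxOf (i+1) := List.idxOf_append_of_mem hi1
  have hx : x.idxOf i < x.length := List.idxOf_lt_length_iff.2 hi
  have hx1 : x.idxOf (i+1) < x.length := List.idxOf_lt_length_iff.2 hi1
  constructor
  · rintro ⟨a, ha, hgt, h1, h2⟩
    rw [e1, e2] at h1 h2
    have hlt : (x ++ z).idxOf a < x.length := lt_of_lt_of_le h2 (by omega)
    have hax : a ∈ x := mem_of_indexOf_lt hlt
    have e3 : (x ++ z).idxOf a = x.idxOf a := List.idxOf_append_of_mem hax
    exact ⟨a, hax, hgt, by rw [e3] at h1; exact h1, by rw [e3] at h2; exact h2⟩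
  · rintro ⟨a, ha, hgt, h1, h2⟩
    refine ⟨a, List.mem_append_left _ ha, hgt, ?_, ?_⟩
    · rw [e1, e2, List.idxOf_append_of_mem ha]; exact h1
    · rw [e1, e2, List.idxOf_append_of_mem ha]; exact h2

theorem toggle_append_left {i : ℕ} {x z : List ℕ} (hnd : (x ++ z).Nodup)
    (hi : i ∈ x) (hi1 : i + 1 ∈ x) : toggle i (x ++ z) = toggle i x ++ z := by
  have hdisj := (List.nodup_append'.1 hnd).2.2
  have hz : i ∉ z := fun h => hdisj hi h
  have hz1 : i + 1 ∉ z := fun h => hdisj hi1 h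
  by_cases h : ToggleApplies i x
  · rw [toggle_pos ((toggleApplies_append_left hi hi1).2 h), toggle_pos h]
    show (x ++ z).map (sf i) = x.map (sf i) ++ z
    rw [List.map_append, map_sf_eq_self hz hz1]
  · rw [toggle_neg (fun hh => h ((toggleApplies_append_left hi hi1).1 hh)), toggle_neg h]

theorem toggleApplies_append_right {i : ℕ} {z x : List ℕ} (hnd : (z ++ x).Nodup)
    (hi : i ∈ x) (hi1 : i + 1 ∈ x) : ToggleApplies i (z ++ x) ↔ ToggleApplies i x := by
  have hdisj := (List.nodup_append'.1 hnd).2.2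
  have hz : i ∉ z := fun h => hdisj h hi
  have hz1 : i + 1 ∉ z := fun h => hdisj h hi1
  have e1 : (z ++ x).idxOf i = z.length + x.idxOf i := List.idxOf_append_of_notMem hz
  have e2 : (z ++ x).idxOf (i+1) = z.length + x.idxOf (i+1) :=
    List.idxOf_append_of_notMem hz1
  constructor
  · rintro ⟨a, ha, hgt, h1, h2⟩
    have haz : a ∉ z := by
      intro haz
      have : (z ++ x).idxOf a < z.length := by
        rw [List.idxOf_append_of_mem haz]; exact List.idxOf_lt_length_iff.2 haz
      omega
    have hax : a ∈ x := (List.mem_append.1 ha).resolve_left haz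
    have e3 : (z ++ x).idxOf a = z.length + x.idxOf a :=
      List.idxOf_append_of_notMem haz
    exact ⟨a, hax, hgt, by omega, by omega⟩
  · rintro ⟨a, ha, hgt, h1, h2⟩
    have haz : a ∉ z := fun h => hdisj h ha
    have e3 : (z ++ x).idxOf a = z.length + x.idxOf a :=
      List.idxOf_append_of_notMem haz
    exact ⟨a, List.mem_append_right _ ha, hgt, by omega, by omega⟩

theorem toggle_append_right {i : ℕ} {z x : List ℕ} (hnd : (z ++ x).Nodup)
    (hi : i ∈ x) (hi1 : i + 1 ∈ x) : toggle i (z ++ x) = z ++ toggle i x := by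
  have hdisj := (List.nodup_append'.1 hnd).2.2
  have hz : i ∉ z := fun h => hdisj h hi
  have hz1 : i + 1 ∉ z := fun h => hdisj h hi1
  by_cases h : ToggleApplies i x
  · rw [toggle_pos ((toggleApplies_append_right hnd hi hi1).2 h), toggle_pos h]
    show (z ++ x).map (sf i) = z ++ x.map (sf i)
    rw [List.map_append, map_sf_eq_self hz hz1]
  · rw [toggle_neg (fun hh => h ((toggleApplies_append_right hnd hi hi1).1 hh)), toggle_neg h]

theorem toggleApplies_swapEntries {i : ℕ} {l : List ℕ} (h : ToggleApplies i l) :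
    ToggleApplies i (swapEntries i l) := by
  obtain ⟨a, ha, hgt, h1, h2⟩ := h
  have e1 : (swapEntries i l).idxOf i = l.idxOf (i+1) :=
    indexOf_map (fun x => sf_eq_i_iff i x) l
  have e2 : (swapEntries i l).idxOf (i+1) = l.idxOf i :=
    indexOf_map (fun x => sf_eq_i1_iff i x) l
  have e3 : (swapEntries i l).idxOf a = l.idxOf a :=
    indexOf_map (fun x => sf_eq_iff_of_gt hgt x) l
  have hmem : a ∈ swapEntries i l := by
    have : sf i a = a := sf_eq_self (by omega) (by omega)
    exact this ▸ List.mem_map_of_mem ha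
  refine ⟨a, hmem, hgt, ?_, ?_⟩
  · rw [e1, e2, e3, Nat.min_comm]; exact h1
  · rw [e1, e2, e3, Nat.max_comm]; exact h2

theorem swapEntries_swapEntries (i : ℕ) (l : List ℕ) :
    swapEntries i (swapEntries i l) = l := by
  show (l.map (sf i)).map (sf i) = l
  rw [List.map_map]
  have : ∀ a ∈ l, (sf i ∘ sf i) a = id a := fun a _ => sf_sf i a
  rw [List.map_congr_left this, List.map_id]

theorem toggle_toggle (i : ℕ) (l : List ℕ) : toggle i (toggle i l) = l := by
  by_cases h : ToggleApplies i l
  · rw [toggle_pos h, toggle_pos (toggleApplies_swapEntries h), swapEntries_swapEntries]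
  · rw [toggle_neg h, toggle_neg h]

theorem swapEntries_perm {i : ℕ} {l : List ℕ} (hnd : l.Nodup) (hi : i ∈ l)
    (hi1 : i + 1 ∈ l) : (swapEntries i l).Perm l := by
  have h1 : l.Perm (i :: l.erase i) := List.perm_cons_erase hi
  have hi1' : i + 1 ∈ l.erase i := (List.mem_erase_of_ne (by omega)).2 hi1
  have h2 : (l.erase i).Perm ((i+1) :: (l.erase i).erase (i+1)) := List.perm_cons_erase hi1'
  set t := (l.erase i).erase (i+1) with ht
  have hnd1 : (l.erase i).Nodup := hnd.erase i
  have hti : i ∉ t := fun h => hnd.not_mem_erase (List.mem_of_mem_erase h)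
  have hti1 : i + 1 ∉ t := hnd1.not_mem_erase
  have hperm : l.Perm (i :: (i+1) :: t) := h1.trans (List.Perm.cons i h2)
  have e1 : l.map (sf i) = l.map (sf i) := rfl
  have p1 : (l.map (sf i)).Perm ((i :: (i+1) :: t).map (sf i)) := hperm.map _
  have e2 : (i :: (i+1) :: t).map (sf i) = (i+1) :: i :: t := by
    simp only [List.map_cons, sf_i, sf_i1, map_sf_eq_self hti hti1]
  have p2 : ((i+1) :: i :: t).Perm (i :: (i+1) :: t) := List.Perm.swap _ _ _
  exact (p1.trans (e2 ▸ p2)).trans hperm.symm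

theorem toggle_perm {i : ℕ} {l : List ℕ} (hnd : l.Nodup) (hi : i ∈ l)
    (hi1 : i + 1 ∈ l) : (toggle i l).Perm l := by
  by_cases h : ToggleApplies i l
  · rw [toggle_pos h]; exact swapEntries_perm hnd hi hi1
  · rw [toggle_neg h]

theorem toggle_length (i : ℕ) (l : List ℕ) : (toggle i l).length = l.length := by
  by_cases h : ToggleApplies i l
  · rw [toggle_pos h]; exact List.length_map (sf i)
  · rw [toggle_neg h]

end Poly
namespace Poly

def Phi (l : List ℕ) : List ℕ :=
  if h : l = [] then []
  else
    have hk : l.idxOf (mx l) < l.length := List.idxOf_lt_length_iff.2 (mx_mem h)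
    Phi (l.take (l.idxOf (mx l))) ++
      l.length :: (Phi (l.drop (l.idxOf (mx l) + 1))).map (· + l.idxOf (mx l))
termination_by l.length
decreasing_by
  · simpa [List.length_take] using by omega
  · simp [List.length_drop]; omega

theorem phi_nil : Phi [] = [] := by rw [Phi]; simp

theorem phi_eq {l : List ℕ} (h : l ≠ []) : Phi l =
    Phi (l.take (l.idxOf (mx l))) ++
      l.length :: (Phi (l.drop (l.idxOf (mx l) + 1))).map (· + l.idxOf (mx l)) := by
  rw [Phi]; simp [h]

theorem not_mem_take_indexOf (v : ℕ) (l : List ℕ) : v ∉ l.take (l.idxOf v) := by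
  intro hmem
  have h1 : (l.take (l.idxOf v)).idxOf v < (l.take (l.idxOf v)).length :=
    List.idxOf_lt_length_iff.2 hmem
  have h2 : (l.take (l.idxOf v)).length ≤ l.idxOf v := by
    simp [List.length_take]
  have h3 : l.idxOf v = (l.take (l.idxOf v)).idxOf v := by
    conv_lhs => rw [← List.take_append_drop (l.idxOf v) l]
    exact List.idxOf_append_of_mem hmem
  omega

theorem phi_decomp {P S : List ℕ} {M : ℕ} (hP : ∀ x ∈ P, x < M) (hS : ∀ x ∈ S, x < M) :
    Phi (P ++ M :: S) =
      Phi P ++ (P.length + S.length + 1) :: (Phi S).map (· + P.length) := by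
  have hM : M ∈ P ++ M :: S := List.mem_append_right _ (List.mem_cons_self)
  have hmx : mx (P ++ M :: S) = M := by
    refine mx_eq hM ?_
    intro x hx
    rcases List.mem_append.1 hx with h | h
    · exact le_of_lt (hP x h)
    · rcases List.mem_cons.1 h with h | h
      · omega
      · exact le_of_lt (hS x h)
  have hMP : M ∉ P := fun h => lt_irrefl M (hP M h)
  have hidx : (P ++ M :: S).idxOf M = P.length := by
    rw [List.idxOf_append_of_notMem hMP, List.idxOf_cons_self]; omega
  have htake : (P ++ M :: S).take P.length = P := List.take_left
  have hdrop : (P ++ M :: S).drop (P.length + 1) = S := by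
    have h1 : (P ++ M :: S).drop P.length = M :: S := List.drop_left
    have h2 : (P ++ M :: S).drop (P.length + 1) = ((P ++ M :: S).drop P.length).drop 1 := by
      rw [List.drop_drop]
    rw [h2, h1]
    rfl
  rw [phi_eq (by simp), hmx, hidx, htake, hdrop]
  simp [List.length_append]
  omega

theorem phi_iso_aux (N : ℕ) : ∀ (f : ℕ → ℕ) (l : List ℕ), l.length ≤ N → l.Nodup →
    (∀ x ∈ l, ∀ y ∈ l, (x < y ↔ f x < f y)) → Phi (l.map f) = Phi l := by
  induction N with
  | zero =>
      intro f l hlen _ _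
      have : l = [] := List.length_eq_zero_iff.1 (Nat.le_zero.1 hlen)
      subst this; simp [phi_nil]
  | succ N ih =>
      intro f l hlen hnd hiso
      rcases eq_or_ne l [] with h0 | h0
      · subst h0; simp [phi_nil]
      set M := mx l with hMdef
      set k := l.idxOf M with hkdef
      have hMl : M ∈ l := mx_mem h0
      have hk : k < l.length := List.idxOf_lt_length_iff.2 hMl
      set P := l.take k with hPdef
      set S := l.drop (k+1) with hSdef
      have hdec : l = P ++ M :: S := decomp l hMl
      have hPsub : ∀ x ∈ P, x ∈ l := fun x hx => List.take_subset _ _ hx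
      have hSsub : ∀ x ∈ S, x ∈ l := fun x hx => List.drop_subset _ _ hx
      have hMP : M ∉ P := not_mem_take_indexOf M l
      have hMS : M ∉ S := by
        have : (M :: S).Nodup := ((List.nodup_append'.1 (hdec ▸ hnd)).2.1)
        exact (List.nodup_cons.1 this).1
      have hP : ∀ x ∈ P, x < M :=
        fun x hx => lt_of_le_of_ne (le_mx (hPsub x hx)) (fun e => hMP (e ▸ hx))
      have hS : ∀ x ∈ S, x < M :=
        fun x hx => lt_of_le_of_ne (le_mx (hSsub x hx)) (fun e => hMS (e ▸ hx))
      have hfP : ∀ x ∈ P.map f, x < f M := by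
        intro x hx
        obtain ⟨y, hy, rfl⟩ := List.mem_map.1 hx
        exact (hiso y (hPsub y hy) M hMl).1 (hP y hy)
      have hfS : ∀ x ∈ S.map f, x < f M := by
        intro x hx
        obtain ⟨y, hy, rfl⟩ := List.mem_map.1 hx
        exact (hiso y (hSsub y hy) M hMl).1 (hS y hy)
      have hmapdec : l.map f = P.map f ++ f M :: S.map f := by
        rw [hdec]; simp
      have hlenP : P.length ≤ N := by
        have : P.length = k := by simp [hPdef, List.length_take]; omega
        omega
      have hlenS : S.length ≤ N := by
        have : S.length = l.length - (k+1) := by simp [hSdef]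
        omega
      have hndP : P.Nodup := hnd.sublist (List.take_sublist _ _)
      have hndS : S.Nodup := hnd.sublist (List.drop_sublist _ _)
      have ihP : Phi (P.map f) = Phi P :=
        ih f P hlenP hndP (fun x hx y hy => hiso x (hPsub x hx) y (hPsub y hy))
      have ihS : Phi (S.map f) = Phi S :=
        ih f S hlenS hndS (fun x hx y hy => hiso x (hSsub x hx) y (hSsub y hy))
      rw [hmapdec, phi_decomp hfP hfS, ihP, ihS]
      conv_rhs => rw [hdec, phi_decomp hP hS]
      simp

theorem phi_iso {f : ℕ → ℕ} {l : List ℕ} (hnd : l.Nodup)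
    (hiso : ∀ x ∈ l, ∀ y ∈ l, (x < y ↔ f x < f y)) : Phi (l.map f) = Phi l :=
  phi_iso_aux l.length f l le_rfl hnd hiso

end Poly
namespace Poly

theorem sf_iso_no_i1 {i : ℕ} {P : List ℕ} (h : i + 1 ∉ P) :
    ∀ x ∈ P, ∀ y ∈ P, (x < y ↔ sf i x < sf i y) := by
  intro x hx y hy
  have hx1 : x ≠ i + 1 := fun e => h (e ▸ hx)
  have hy1 : y ≠ i + 1 := fun e => h (e ▸ hy)
  unfold sf
  by_cases ex : x = i <;> by_cases ey : y = i <;> simp [ex, ey, hx1, hy1] <;> omega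

theorem sf_iso_no_i {i : ℕ} {P : List ℕ} (h : i ∉ P) :
    ∀ x ∈ P, ∀ y ∈ P, (x < y ↔ sf i x < sf i y) := by
  intro x hx y hy
  have hx1 : x ≠ i := fun e => h (e ▸ hx)
  have hy1 : y ≠ i := fun e => h (e ▸ hy)
  unfold sf
  by_cases ex : x = i + 1 <;> by_cases ey : y = i + 1 <;> simp [ex, ey, hx1, hy1] <;> omega

theorem sf_lt {i M x : ℕ} (hM : i + 1 < M) (hx : x < M) : sf i x < M := by
  unfold sf
  by_cases e1 : x = i
  · simp [e1]; omega
  · by_cases e2 : x = i + 1 <;> simp [e1, e2] <;> omega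

theorem phi_toggle_aux (N : ℕ) : ∀ (i : ℕ) (l : List ℕ), l.length ≤ N → l.Nodup →
    i ∈ l → i + 1 ∈ l → Phi (toggle i l) = Phi l := by
  induction N with
  | zero =>
      intro i l hlen _ hi _
      have : l = [] := List.length_eq_zero_iff.1 (Nat.le_zero.1 hlen)
      subst this; simp at hi
  | succ N ih =>
      intro i l hlen hnd hi hi1
      by_cases happ : ToggleApplies i l
      case neg => rw [toggle_neg happ]
      obtain ⟨a, ha, hgt, -, -⟩ := id happ
      have h0 : l ≠ [] := fun e => by simp [e] at hi
      set M := mx l with hMdef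
      set k := l.idxOf M with hkdef
      have hMl : M ∈ l := mx_mem h0
      have hk : k < l.length := List.idxOf_lt_length_iff.2 hMl
      set P := l.take k with hPdef
      set S := l.drop (k+1) with hSdef
      have hdec : l = P ++ M :: S := decomp l hMl
      have hndl : (P ++ M :: S).Nodup := hdec ▸ hnd
      have hndP : P.Nodup := (List.nodup_append'.1 hndl).1
      have hndMS : (M :: S).Nodup := (List.nodup_append'.1 hndl).2.1
      have hndS : S.Nodup := (List.nodup_cons.1 hndMS).2
      have hdisj : List.Disjoint P (M :: S) := (List.nodup_append'.1 hndl).2.2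
      have hMS : M ∉ S := (List.nodup_cons.1 hndMS).1
      have hMP : M ∉ P := not_mem_take_indexOf M l
      have hPsub : ∀ x ∈ P, x ∈ l := fun x hx => List.take_subset _ _ hx
      have hSsub : ∀ x ∈ S, x ∈ l := fun x hx => List.drop_subset _ _ hx
      have hP : ∀ x ∈ P, x < M :=
        fun x hx => lt_of_le_of_ne (le_mx (hPsub x hx)) (fun e => hMP (e ▸ hx))
      have hS : ∀ x ∈ S, x < M :=
        fun x hx => lt_of_le_of_ne (le_mx (hSsub x hx)) (fun e => hMS (e ▸ hx))
      have hMgt : i + 1 < M := lt_of_lt_of_le hgt (le_mx ha)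
      have hiM : i ≠ M := by omega
      have hi1M : i + 1 ≠ M := by omega
      have hPlen : P.length ≤ N := by
        have : P.length = k := by simp [hPdef, List.length_take]; omega
        omega
      have hSlen : S.length ≤ N := by
        have : S.length = l.length - (k+1) := by simp [hSdef]
        omega
      have hiPS : i ∈ P ∨ i ∈ S := by
        have := hdec ▸ hi
        rcases List.mem_append.1 this with h | h
        · exact Or.inl h
        · rcases List.mem_cons.1 h with h | h
          · exact absurd h hiM
          · exact Or.inr h
      have hi1PS : i + 1 ∈ P ∨ i + 1 ∈ S := by
        have := hdec ▸ hi1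
        rcases List.mem_append.1 this with h | h
        · exact Or.inl h
        · rcases List.mem_cons.1 h with h | h
          · exact absurd h hi1M
          · exact Or.inr h
      have hlenl : l.length = P.length + S.length + 1 := by
        rw [hdec]; simp; omega
      rcases hiPS with hiP | hiS <;> rcases hi1PS with hi1P | hi1S
      · -- both in P
        have e1 : toggle i l = toggle i P ++ (M :: S) := by
          conv_lhs => rw [hdec]
          exact toggle_append_left hndl hiP hi1P
        have hperm : (toggle i P).Perm P := toggle_perm hndP hiP hi1P
        have hP' : ∀ x ∈ toggle i P, x < M := fun x hx => hP x (hperm.mem_iff.1 hx)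
        rw [e1, phi_decomp hP' hS, ih i P hPlen hndP hiP hi1P]
        conv_rhs => rw [hdec, phi_decomp hP hS]
        simp only [toggle_length]
      · -- i in P, i+1 in S : split case
        have hi1nP : i + 1 ∉ P := fun h => hdisj h (List.mem_cons_of_mem _ hi1S)
        have hinS : i ∉ S := fun h => hdisj hiP (List.mem_cons_of_mem _ h)
        have e1 : toggle i l = P.map (sf i) ++ M :: S.map (sf i) := by
          rw [toggle_pos happ]
          conv_lhs => rw [hdec]
          show (P ++ M :: S).map (sf i) = P.map (sf i) ++ M :: S.map (sf i)
          rw [List.map_append, List.map_cons, sf_eq_self (Ne.symm hiM) (Ne.symm hi1M)]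
        have hP' : ∀ x ∈ P.map (sf i), x < M := by
          intro x hx
          obtain ⟨y, hy, rfl⟩ := List.mem_map.1 hx
          exact sf_lt hMgt (hP y hy)
        have hS' : ∀ x ∈ S.map (sf i), x < M := by
          intro x hx
          obtain ⟨y, hy, rfl⟩ := List.mem_map.1 hx
          exact sf_lt hMgt (hS y hy)
        rw [e1, phi_decomp hP' hS', phi_iso hndP (sf_iso_no_i1 hi1nP),
          phi_iso hndS (sf_iso_no_i hinS)]
        conv_rhs => rw [hdec, phi_decomp hP hS]
        simp [List.length_map]
      · -- i+1 in P, i in S : split case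
        have hinP : i ∉ P := fun h => hdisj h (List.mem_cons_of_mem _ hiS)
        have hi1nS : i + 1 ∉ S := fun h => hdisj hi1P (List.mem_cons_of_mem _ h)
        have e1 : toggle i l = P.map (sf i) ++ M :: S.map (sf i) := by
          rw [toggle_pos happ]
          conv_lhs => rw [hdec]
          show (P ++ M :: S).map (sf i) = P.map (sf i) ++ M :: S.map (sf i)
          rw [List.map_append, List.map_cons, sf_eq_self (Ne.symm hiM) (Ne.symm hi1M)]
        have hP' : ∀ x ∈ P.map (sf i), x < M := by
          intro x hx
          obtain ⟨y, hy, rfl⟩ := List.mem_map.1 hx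
          exact sf_lt hMgt (hP y hy)
        have hS' : ∀ x ∈ S.map (sf i), x < M := by
          intro x hx
          obtain ⟨y, hy, rfl⟩ := List.mem_map.1 hx
          exact sf_lt hMgt (hS y hy)
        rw [e1, phi_decomp hP' hS', phi_iso hndP (sf_iso_no_i hinP),
          phi_iso hndS (sf_iso_no_i1 hi1nS)]
        conv_rhs => rw [hdec, phi_decomp hP hS]
        simp [List.length_map]
      · -- both in S
        have hdec2 : l = (P ++ [M]) ++ S := by rw [hdec]; simp
        have hndl2 : ((P ++ [M]) ++ S).Nodup := hdec2 ▸ hnd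
        have e1 : toggle i l = (P ++ [M]) ++ toggle i S := by
          conv_lhs => rw [hdec2]
          exact toggle_append_right hndl2 hiS hi1S
        have hperm : (toggle i S).Perm S := toggle_perm hndS hiS hi1S
        have hS' : ∀ x ∈ toggle i S, x < M := fun x hx => hS x (hperm.mem_iff.1 hx)
        have e2 : (P ++ [M]) ++ toggle i S = P ++ M :: toggle i S := by simp
        rw [e1, e2, phi_decomp hP hS', ih i S hSlen hndS hiS hi1S]
        conv_rhs => rw [hdec, phi_decomp hP hS]
        simp only [toggle_length]

theorem phi_toggle {i : ℕ} {l : List ℕ} (hnd : l.Nodup) (hi : i ∈ l) (hi1 : i + 1 ∈ l) :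
    Phi (toggle i l) = Phi l :=
  phi_toggle_aux l.length i l le_rfl hnd hi hi1

end Poly
namespace Poly

theorem getD_mem {l : List ℕ} {j : ℕ} (h : j < l.length) : l.getD j 0 ∈ l := by
  rw [List.getD_eq_getElem l 0 h]; exact List.getElem_mem h

theorem getD_left {P Z : List ℕ} {j : ℕ} (h : j < P.length) :
    (P ++ Z).getD j 0 = P.getD j 0 := List.getD_append P Z 0 j h

theorem getD_mid {P S : List ℕ} {M : ℕ} :
    (P ++ M :: S).getD P.length 0 = M := by
  rw [List.getD_append_right P (M :: S) 0 P.length le_rfl, Nat.sub_self]; rfl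

theorem getD_right {P S : List ℕ} {M : ℕ} {j : ℕ} (h : P.length < j) :
    (P ++ M :: S).getD j 0 = S.getD (j - P.length - 1) 0 := by
  rw [List.getD_append_right P (M :: S) 0 j (le_of_lt h)]
  obtain ⟨t, ht⟩ : ∃ t, j - P.length = t + 1 := ⟨j - P.length - 1, by omega⟩
  rw [ht]
  simp

theorem len_decomp (P S : List ℕ) (M : ℕ) :
    (P ++ M :: S).length = P.length + S.length + 1 := by simp; omega

theorem avoids_compose {P S : List ℕ} {M : ℕ} (hP : Avoids231 P) (hS : Avoids231 S)
    (hPM : ∀ x ∈ P, x < M) (hSM : ∀ y ∈ S, y < M)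
    (hPS : ∀ x ∈ P, ∀ y ∈ S, x < y) : Avoids231 (P ++ M :: S) := by
  rintro ⟨j1, j2, j3, h12, h23, h3, hv1, hv2⟩
  rw [len_decomp] at h3
  rcases lt_trichotomy j1 P.length with hj1 | hj1 | hj1
  · rcases lt_or_ge j3 P.length with hj3 | hj3
    · have hj2 : j2 < P.length := lt_trans h23 hj3
      exact hP ⟨j1, j2, j3, h12, h23, by omega, by
        rw [getD_left hj1, getD_left hj3] at hv1; exact hv1, by
        rw [getD_left hj1, getD_left hj2] at hv2; exact hv2⟩
    · have hm1 : (P ++ M :: S).getD j1 0 ∈ P := by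
        rw [getD_left hj1]; exact getD_mem hj1
      have hlt : (P ++ M :: S).getD j1 0 < M := hPM _ hm1
      rcases eq_or_lt_of_le hj3 with hj3e | hj3l
      · have h1 : M < (P ++ M :: S).getD j1 0 := by
          rw [← hj3e, getD_mid] at hv1; exact hv1
        omega
      · have hm3 : (P ++ M :: S).getD j3 0 ∈ S := by
          rw [getD_right hj3l]; exact getD_mem (by omega)
        have := hPS _ hm1 _ hm3
        omega
  · have hj2 : P.length < j2 := hj1 ▸ h12
    have hm2 : (P ++ M :: S).getD j2 0 ∈ S := by
      rw [getD_right hj2]; exact getD_mem (by omega)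
    have h1 : M < (P ++ M :: S).getD j2 0 := by
      rw [hj1, getD_mid] at hv2; exact hv2
    have := hSM _ hm2
    omega
  · have hj2 : P.length < j2 := lt_trans hj1 h12
    have hj3 : P.length < j3 := lt_trans hj2 h23
    refine hS ⟨j1 - P.length - 1, j2 - P.length - 1, j3 - P.length - 1,
      by omega, by omega, by omega, ?_, ?_⟩
    · rw [getD_right hj1, getD_right hj3] at hv1; exact hv1
    · rw [getD_right hj1, getD_right hj2] at hv2; exact hv2

theorem avoids_prefix {P Z : List ℕ} (h : Avoids231 (P ++ Z)) : Avoids231 P := by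
  rintro ⟨j1, j2, j3, h12, h23, h3, hv1, hv2⟩
  exact h ⟨j1, j2, j3, h12, h23, by rw [List.length_append]; omega, by
    rw [getD_left (lt_trans (lt_trans h12 h23) h3), getD_left h3]; exact hv1, by
    rw [getD_left (lt_trans (lt_trans h12 h23) h3), getD_left (lt_trans h23 h3)]; exact hv2⟩

theorem getD_suffix {Z S : List ℕ} {j : ℕ} (h : j < S.length) :
    (Z ++ S).getD (Z.length + j) 0 = S.getD j 0 := by
  rw [List.getD_append_right Z S 0 _ (by omega), Nat.add_sub_cancel_left]

theorem avoids_suffix {Z S : List ℕ} (h : Avoids231 (Z ++ S)) : Avoids231 S := by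
  rintro ⟨j1, j2, j3, h12, h23, h3, hv1, hv2⟩
  refine h ⟨Z.length + j1, Z.length + j2, Z.length + j3, by omega, by omega, by
    rw [List.length_append]; omega, ?_, ?_⟩
  · rw [getD_suffix (show j3 < S.length by omega), getD_suffix (show j1 < S.length by omega)]
    exact hv1
  · rw [getD_suffix (show j1 < S.length by omega), getD_suffix (show j2 < S.length by omega)]
    exact hv2

theorem avoids_parts_lt {P S : List ℕ} {M : ℕ} (hA : Avoids231 (P ++ M :: S))
    (hPM : ∀ x ∈ P, x < M) : ∀ a ∈ P, ∀ b ∈ S, b < a → False := by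
  intro a ha b hb hba
  have hj1 : P.idxOf a < P.length := List.idxOf_lt_length_iff.2 ha
  have hj3' : S.idxOf b < S.length := List.idxOf_lt_length_iff.2 hb
  refine hA ⟨P.idxOf a, P.length, P.length + 1 + S.idxOf b, hj1, by omega, by
    rw [len_decomp]; omega, ?_, ?_⟩
  · rw [getD_left hj1, getD_right (by omega)]
    have e1 : P.getD (P.idxOf a) 0 = a := by
      rw [List.getD_eq_getElem _ _ hj1]; exact List.getElem_idxOf hj1
    have e2 : S.getD (P.length + 1 + S.idxOf b - P.length - 1) 0 = b := by
      have : P.length + 1 + S.idxOf b - P.length - 1 = S.idxOf b := by omega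
      rw [this, List.getD_eq_getElem _ _ hj3']; exact List.getElem_idxOf hj3'
    rw [e1, e2]; exact hba
  · rw [getD_left hj1, getD_mid]
    have e1 : P.getD (P.idxOf a) 0 = a := by
      rw [List.getD_eq_getElem _ _ hj1]; exact List.getElem_idxOf hj1
    rw [e1]; exact hPM a ha

theorem avoids_map_iso {f : ℕ → ℕ} {l : List ℕ}
    (hiso : ∀ x ∈ l, ∀ y ∈ l, (x < y ↔ f x < f y)) (hA : Avoids231 l) :
    Avoids231 (l.map f) := by
  rintro ⟨j1, j2, j3, h12, h23, h3, hv1, hv2⟩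
  rw [List.length_map] at h3
  have hg : ∀ j, j < l.length → (l.map f).getD j 0 = f (l.getD j 0) := by
    intro j hj
    rw [List.getD_eq_getElem _ _ (by rw [List.length_map]; exact hj),
      List.getD_eq_getElem _ _ hj, List.getElem_map]
  rw [hg j3 (by omega), hg j1 (by omega)] at hv1
  rw [hg j1 (by omega), hg j2 (by omega)] at hv2
  have m1 : l.getD j1 0 ∈ l := getD_mem (by omega)
  have m2 : l.getD j2 0 ∈ l := getD_mem (by omega)
  have m3 : l.getD j3 0 ∈ l := getD_mem (by omega)
  exact hA ⟨j1, j2, j3, h12, h23, h3, (hiso _ m3 _ m1).2 hv1, (hiso _ m1 _ m2).2 hv2⟩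

end Poly
namespace Poly

theorem perm_range_bounds {l : List ℕ} {s m : ℕ} (h : l.Perm (List.range' s m)) :
    ∀ x ∈ l, s ≤ x ∧ x < s + m := by
  intro x hx
  exact List.mem_range'_1.1 (h.mem_iff.1 hx)

theorem perm_range_nodup {l : List ℕ} {s m : ℕ} (h : l.Perm (List.range' s m)) :
    l.Nodup := h.nodup_iff.2 (List.nodup_range')

theorem perm_range_length {l : List ℕ} {s m : ℕ} (h : l.Perm (List.range' s m)) :
    l.length = m := by
  rw [h.length_eq, List.length_range']

theorem subperm_range {l : List ℕ} {s m : ℕ} (hnd : l.Nodup)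
    (hb : ∀ x ∈ l, s ≤ x ∧ x < s + m) : l.Subperm (List.range' s m) :=
  List.subperm_of_subset hnd (fun x hx => List.mem_range'_1.2 (hb x hx))

theorem length_le_of_bounds {l : List ℕ} {s m : ℕ} (hnd : l.Nodup)
    (hb : ∀ x ∈ l, s ≤ x ∧ x < s + m) : l.length ≤ m := by
  have := (subperm_range hnd hb).length_le
  rwa [List.length_range'] at this

theorem perm_range_of_bounds {l : List ℕ} {s m : ℕ} (hnd : l.Nodup)
    (hb : ∀ x ∈ l, s ≤ x ∧ x < s + m) (hlen : m ≤ l.length) :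
    l.Perm (List.range' s m) :=
  (subperm_range hnd hb).perm_of_length_le (by rwa [List.length_range'])

theorem phi_fix_aux (N : ℕ) : ∀ (n : ℕ) (l : List ℕ), n ≤ N → l.Perm (List.range' 1 n) →
    Avoids231 l → Phi l = l := by
  induction N with
  | zero =>
      intro n l hn hl _
      have : n = 0 := by omega
      subst this
      have : l = [] := by simpa using hl
      subst this; exact phi_nil
  | succ N ih =>
      intro n l hn hl hA
      rcases eq_or_ne l [] with h0 | h0
      · subst h0; exact phi_nil
      have hlen : l.length = n := perm_range_length hl
      have hn1 : 1 ≤ n := by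
        rcases Nat.eq_zero_or_pos n with h | h
        · exfalso; apply h0; rw [← List.length_eq_zero_iff, hlen, h]
        · exact h
      have hb : ∀ x ∈ l, 1 ≤ x ∧ x < 1 + n := perm_range_bounds hl
      have hnd : l.Nodup := perm_range_nodup hl
      have hnl : n ∈ l := hl.mem_iff.2 (List.mem_range'_1.2 ⟨hn1, by omega⟩)
      have hmx : mx l = n := mx_eq hnl (fun x hx => by have := hb x hx; omega)
      set k := l.idxOf (mx l) with hkdef
      have hkn : l.idxOf n = k := by rw [hkdef, hmx]
      set P := l.take k with hPdef
      set S := l.drop (k+1) with hSdef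
      have hdec : l = P ++ n :: S := by
        have := decomp l hnl
        rw [hkn] at this
        exact this
      have hndl : (P ++ n :: S).Nodup := hdec ▸ hnd
      have hndP : P.Nodup := (List.nodup_append'.1 hndl).1
      have hndMS : (n :: S).Nodup := (List.nodup_append'.1 hndl).2.1
      have hndS : S.Nodup := (List.nodup_cons.1 hndMS).2
      have hdisj : List.Disjoint P (n :: S) := (List.nodup_append'.1 hndl).2.2
      have hnS : n ∉ S := (List.nodup_cons.1 hndMS).1
      have hnP : n ∉ P := fun h => hdisj h (List.mem_cons_self)
      have hPsub : ∀ x ∈ P, x ∈ l := fun x hx => hdec ▸ List.mem_append_left _ hx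
      have hSsub : ∀ x ∈ S, x ∈ l := fun x hx =>
        hdec ▸ List.mem_append_right _ (List.mem_cons_of_mem _ hx)
      have hP : ∀ x ∈ P, x < n := fun x hx =>
        lt_of_le_of_ne (by have := hb x (hPsub x hx); omega) (fun e => hnP (e ▸ hx))
      have hS : ∀ x ∈ S, x < n := fun x hx =>
        lt_of_le_of_ne (by have := hb x (hSsub x hx); omega) (fun e => hnS (e ▸ hx))
      have hA' : Avoids231 (P ++ n :: S) := hdec ▸ hA
      have horder : ∀ a ∈ P, ∀ b ∈ S, a < b := by
        intro a ha b hb'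
        have hne : a ≠ b := fun e => hdisj ha (List.mem_cons_of_mem _ (e ▸ hb'))
        rcases lt_or_ge a b with h | h
        · exact h
        · exact absurd (avoids_parts_lt hA' hP a ha b hb' (by omega)) not_false
      have hlenl : P.length + S.length + 1 = n := by
        rw [← hlen, hdec, len_decomp]
      -- P is a permutation of range' 1 P.length
      have claim1 : ∀ a ∈ P, a ≤ P.length := by
        intro a ha
        have hT : (n :: S).Nodup := hndMS
        have hTb : ∀ x ∈ n :: S, a + 1 ≤ x ∧ x < a + 1 + (n - a) := by
          intro x hx
          rcases List.mem_cons.1 hx with h | h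
          · subst h; have := hP a ha; omega
          · have h1 := horder a ha x h
            have h2 := hS x h
            omega
        have := length_le_of_bounds hT hTb
        simp at this
        omega
      have hPperm : P.Perm (List.range' 1 P.length) := by
        refine perm_range_of_bounds hndP (fun x hx => ?_) le_rfl
        have h1 := hb x (hPsub x hx)
        have h2 := claim1 x hx
        omega
      have claim2 : ∀ b ∈ S, P.length + 1 ≤ b := by
        intro b hb'
        have hPb : ∀ x ∈ P, 1 ≤ x ∧ x < 1 + (b - 1) := by
          intro x hx
          have h1 := hb x (hPsub x hx)
          have h2 := horder x hx b hb'
          omega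
        have := length_le_of_bounds hndP hPb
        have h3 := hb b (hSsub b hb')
        omega
      have hSperm : S.Perm (List.range' (P.length + 1) (n - 1 - P.length)) := by
        refine perm_range_of_bounds hndS (fun x hx => ?_) (by omega)
        have h1 := hS x hx
        have h2 := claim2 x hx
        omega
      have hAP : Avoids231 P := avoids_prefix hA'
      have hAS : Avoids231 S := by
        have : Avoids231 ((P ++ [n]) ++ S) := by
          have e : (P ++ [n]) ++ S = P ++ n :: S := by simp
          rw [e]; exact hA'
        exact avoids_suffix this
      have hPlen : P.length ≤ N := by omega
      have ihP : Phi P = P := ih P.length P hPlen hPperm hAP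
      -- S part
      set p := P.length with hpdef
      set S₀ := S.map (· - p) with hS0def
      have he0 : S₀.map (· + p) = S := by
        rw [hS0def, List.map_map]
        have : ∀ x ∈ S, (((· + p) ∘ (· - p)) x) = id x := by
          intro x hx
          have := claim2 x hx
          simp
          omega
        rw [List.map_congr_left this, List.map_id]
      have hrange : List.range' (p + 1) (n - 1 - p) =
          (List.range' 1 (n - 1 - p)).map (p + ·) := by
        rw [List.map_add_range']
      have hS0perm : S₀.Perm (List.range' 1 (n - 1 - p)) := by
        have h1 : S₀.Perm ((List.range' (p+1) (n-1-p)).map (· - p)) := hSperm.map _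
        have h2 : (List.range' (p+1) (n-1-p)).map (· - p) = List.range' 1 (n-1-p) := by
          rw [hrange, List.map_map]
          have : ∀ x ∈ List.range' 1 (n-1-p), (((· - p) ∘ (p + ·)) x) = id x := by
            intro x _; simp
          rw [List.map_congr_left this, List.map_id]
        rwa [h2] at h1
      have hAS0 : Avoids231 S₀ := by
        refine avoids_map_iso (fun x hx y hy => ?_) hAS
        have := claim2 x hx
        have := claim2 y hy
        omega
      have hS0len : n - 1 - p ≤ N := by omega
      have ihS : Phi S₀ = S₀ := ih (n - 1 - p) S₀ hS0len hS0perm hAS0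
      have hphiS : Phi S = S₀ := by
        rw [← he0]
        rw [phi_iso (perm_range_nodup hS0perm) (fun x _ y _ => by constructor <;> omega)]
        exact ihS
      conv_lhs => rw [hdec, phi_decomp hP hS]
      rw [ihP, hphiS, hlenl, he0, ← hdec]

end Poly
namespace Poly

/-- toggles with values in `(s, s+m]` -/
def StepV (s m : ℕ) (x y : List ℕ) : Prop :=
  ∃ i, s + 1 ≤ i ∧ i + 1 ≤ s + m ∧ y = toggle i x

theorem stepV_symm {s m : ℕ} {x y : List ℕ} (h : StepV s m x y) : StepV s m y x := by
  obtain ⟨i, h1, h2, rfl⟩ := h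
  exact ⟨i, h1, h2, (toggle_toggle i x).symm⟩

theorem stepV_mem {s m i : ℕ} {x : List ℕ} (hx : x.Perm (List.range' (s+1) m))
    (h1 : s + 1 ≤ i) (h2 : i + 1 ≤ s + m) : i ∈ x ∧ i + 1 ∈ x :=
  ⟨hx.mem_iff.2 (List.mem_range'_1.2 ⟨h1, by omega⟩),
   hx.mem_iff.2 (List.mem_range'_1.2 ⟨by omega, by omega⟩)⟩

theorem stepV_perm {s m : ℕ} {x y : List ℕ} (hx : x.Perm (List.range' (s+1) m))
    (h : StepV s m x y) : y.Perm (List.range' (s+1) m) := by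
  obtain ⟨i, h1, h2, rfl⟩ := h
  obtain ⟨hi, hi1⟩ := stepV_mem hx h1 h2
  exact (toggle_perm (perm_range_nodup hx) hi hi1).trans hx

theorem eqvgen_perm_iff {s m : ℕ} {x y : List ℕ}
    (h : Relation.EqvGen (StepV s m) x y) :
    x.Perm (List.range' (s+1) m) ↔ y.Perm (List.range' (s+1) m) := by
  induction h with
  | rel a b hab => exact ⟨fun h => stepV_perm h hab, fun h => stepV_perm h (stepV_symm hab)⟩
  | refl a => exact Iff.rfl
  | symm a b _ ih => exact ih.symm
  | trans a b c _ _ ih1 ih2 => exact ih1.trans ih2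

theorem lift_left {s k m : ℕ} (hkm : k ≤ m) {z : List ℕ} (hznd : z.Nodup)
    (hz : ∀ v ∈ z, s + k < v) {x y : List ℕ}
    (h : Relation.EqvGen (StepV s k) x y) (hx : x.Perm (List.range' (s+1) k)) :
    Relation.EqvGen (StepV s m) (x ++ z) (y ++ z) := by
  induction h with
  | rel a b hab =>
      obtain ⟨i, h1, h2, rfl⟩ := hab
      obtain ⟨hi, hi1⟩ := stepV_mem hx h1 h2
      have hnd : (a ++ z).Nodup := by
        rw [List.nodup_append']
        refine ⟨perm_range_nodup hx, hznd, fun v hv hvz => ?_⟩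
        have := perm_range_bounds hx v hv
        have := hz v hvz
        omega
      refine Relation.EqvGen.rel _ _ ⟨i, h1, by omega, ?_⟩
      rw [toggle_append_left hnd hi hi1]
  | refl a => exact Relation.EqvGen.refl _
  | symm a b hab ih =>
      have ha : a.Perm (List.range' (s+1) k) := (eqvgen_perm_iff hab).2 hx
      exact Relation.EqvGen.symm _ _ (ih ha)
  | trans a b c hab _ ih1 ih2 =>
      have hb : b.Perm (List.range' (s+1) k) := (eqvgen_perm_iff hab).1 hx
      exact Relation.EqvGen.trans _ _ _ (ih1 hx) (ih2 hb)

theorem lift_right {s' m' s m : ℕ} (hs : s ≤ s') (hm : s' + m' ≤ s + m)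
    {z : List ℕ} (hznd : z.Nodup) (hz : ∀ v ∈ z, v ≤ s' ∨ s' + m' < v) {x y : List ℕ}
    (h : Relation.EqvGen (StepV s' m') x y) (hx : x.Perm (List.range' (s'+1) m')) :
    Relation.EqvGen (StepV s m) (z ++ x) (z ++ y) := by
  induction h with
  | rel a b hab =>
      obtain ⟨i, h1, h2, rfl⟩ := hab
      obtain ⟨hi, hi1⟩ := stepV_mem hx h1 h2
      have hnd : (z ++ a).Nodup := by
        rw [List.nodup_append']
        refine ⟨hznd, perm_range_nodup hx, fun v hvz hv => ?_⟩
        have := perm_range_bounds hx v hv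
        have := hz v hvz
        omega
      refine Relation.EqvGen.rel _ _ ⟨i, by omega, by omega, ?_⟩
      rw [toggle_append_right hnd hi hi1]
  | refl a => exact Relation.EqvGen.refl _
  | symm a b hab ih =>
      have ha : a.Perm (List.range' (s'+1) m') := (eqvgen_perm_iff hab).2 hx
      exact Relation.EqvGen.symm _ _ (ih ha)
  | trans a b c hab _ ih1 ih2 =>
      have hb : b.Perm (List.range' (s'+1) m') := (eqvgen_perm_iff hab).1 hx
      exact Relation.EqvGen.trans _ _ _ (ih1 hx) (ih2 hb)

theorem mem_le_sum {P : List ℕ} {v : ℕ} (h : v ∈ P) : v ≤ P.sum := by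
  induction P with
  | nil => simp at h
  | cons a t ih =>
      rcases List.mem_cons.1 h with h | h
      · subst h; simp
      · have := ih h; simp; omega

theorem sum_map_sf {i : ℕ} {P : List ℕ} (hnd : P.Nodup) (hv : i + 1 ∈ P) (hni : i ∉ P) :
    (P.map (sf i)).sum + 1 = P.sum := by
  induction P with
  | nil => simp at hv
  | cons a t ih =>
      have hnd' : t.Nodup := (List.nodup_cons.1 hnd).2
      have hni' : i ∉ t := fun h => hni (List.mem_cons_of_mem _ h)
      rcases eq_or_ne a (i+1) with rfl | ha
      · have hi1t : i + 1 ∉ t := (List.nodup_cons.1 hnd).1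
        simp only [List.map_cons, sf_i1, List.sum_cons, map_sf_eq_self hni' hi1t]
        omega
      · have hv' : i + 1 ∈ t := (List.mem_cons.1 hv).resolve_left (fun e => ha e.symm)
        have hai : a ≠ i := fun e => hni (e ▸ List.mem_cons_self)
        simp only [List.map_cons, sf_eq_self hai ha, List.sum_cons]
        have := ih hnd' hv' hni'
        omega

theorem initial_seg {s : ℕ} {P : List ℕ} (hnd : P.Nodup) (hb : ∀ v ∈ P, s + 1 ≤ v)
    (hcl : ∀ v ∈ P, s + 2 ≤ v → v - 1 ∈ P) : P.Perm (List.range' (s+1) P.length) := by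
  have aux : ∀ (d v : ℕ), v ∈ P → s + 1 ≤ v - d → v - d ∈ P := by
    intro d
    induction d with
    | zero => intro v hv _; simpa using hv
    | succ d ih =>
        intro v hv hle
        have h1 : s + 1 ≤ v - d := by omega
        have h2 : v - d ∈ P := ih v hv h1
        have h3 : s + 2 ≤ v - d := by omega
        have := hcl _ h2 h3
        have e : v - d - 1 = v - (d+1) := by omega
        rwa [e] at this
  have bound : ∀ v ∈ P, v ≤ s + P.length := by
    intro v hv
    have hsub : List.range' (s+1) (v - s) ⊆ P := by
      intro j hj
      have hj' := List.mem_range'_1.1 hj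
      have hv1 := hb v hv
      have e : j = v - (v - j) := by omega
      rw [e]
      exact aux (v - j) v hv (by omega)
    have := (List.subperm_of_subset (List.nodup_range') hsub).length_le
    rw [List.length_range'] at this
    have := hb v hv
    omega
  exact perm_range_of_bounds hnd
    (fun x hx => ⟨hb x hx, by have := bound x hx; omega⟩) le_rfl

theorem find_gap {s : ℕ} {P : List ℕ} (hnd : P.Nodup) (hb : ∀ v ∈ P, s + 1 ≤ v)
    (h : ¬ P.Perm (List.range' (s+1) P.length)) : ∃ v ∈ P, s + 2 ≤ v ∧ v - 1 ∉ P := by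
  by_contra hc
  push_neg at hc
  exact h (initial_seg hnd hb hc)
  
end Poly
namespace Poly

theorem range_tail_perm {s p m : ℕ} (hpm : p < m) :
    ((s+m) :: List.range' (s+1+p) (m-1-p)).Perm (List.range' (s+1+p) (m-p)) := by
  have e1 : List.range' (s+1+p) (m-p) = List.range' (s+1+p) (m-p-1) ++ [s+1+p + (m-p-1)] := by
    obtain ⟨t, ht⟩ : ∃ t, m - p - 1 = t := ⟨_, rfl⟩
    rw [ht, show m - p = t + 1 by omega, List.range'_concat, Nat.one_mul]
  have e2 : s+1+p + (m-p-1) = s + m := by omega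
  have e3 : m - p - 1 = m - 1 - p := by omega
  rw [e1, e2, e3]
  exact (List.perm_append_singleton _ _).symm

theorem range_append {s p m : ℕ} (hpm : p ≤ m) :
    List.range' (s+1) p ++ List.range' (s+1+p) (m-p) = List.range' (s+1) m := by
  have := List.range'_append (s := s+1) (m := p) (n := m-p) (step := 1)
  rw [Nat.one_mul] at this
  rw [show s+1+p = s+1+p from rfl] at this
  rw [this]
  congr 1
  omega

theorem c1_done {s m : ℕ} {P S : List ℕ} (hP : P.Perm (List.range' (s+1) P.length))
    (hl : (P ++ (s+m) :: S).Perm (List.range' (s+1) m)) :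
    S.Perm (List.range' (s+1+P.length) (m-1-P.length)) := by
  have hlen : P.length + S.length + 1 = m := by
    have := perm_range_length hl
    rw [len_decomp] at this
    omega
  have hpm : P.length < m := by omega
  have h1 : (List.range' (s+1) P.length ++ (s+m) :: S).Perm (List.range' (s+1) m) :=
    (( hP.symm.append_right ((s+m) :: S))).trans hl
  have h2 : (List.range' (s+1) P.length ++ (s+m) :: S).Perm
      (List.range' (s+1) P.length ++ List.range' (s+1+P.length) (m-P.length)) := by
    rw [range_append (le_of_lt hpm)]
    exact h1
  have h3 : ((s+m) :: S).Perm (List.range' (s+1+P.length) (m-P.length)) :=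
    (List.perm_append_left_iff _).1 h2
  have h4 : ((s+m) :: S).Perm ((s+m) :: List.range' (s+1+P.length) (m-1-P.length)) :=
    h3.trans (range_tail_perm hpm).symm
  exact h4.cons_inv

theorem c1_aux (T : ℕ) : ∀ (s m : ℕ) (P S : List ℕ), P.sum ≤ T →
    (P ++ (s+m) :: S).Perm (List.range' (s+1) m) →
    ∃ P₁ S₁, P₁.length = P.length ∧ P₁.Perm (List.range' (s+1) P.length) ∧
      S₁.Perm (List.range' (s+1+P.length) (m-1-P.length)) ∧
      Relation.EqvGen (StepV s m) (P ++ (s+m)::S) (P₁ ++ (s+m)::S₁) := by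
  induction T with
  | zero =>
      intro s m P S hsum hl
      have hnd : (P ++ (s+m) :: S).Nodup := perm_range_nodup hl
      have hndP : P.Nodup := (List.nodup_append'.1 hnd).1
      have hb : ∀ v ∈ P, s + 1 ≤ v := fun v hv =>
        (perm_range_bounds hl v (List.mem_append_left _ hv)).1
      have hPp : P.Perm (List.range' (s+1) P.length) := by
        by_contra hc
        obtain ⟨v, hv, hv2, -⟩ := find_gap hndP hb hc
        have := mem_le_sum hv
        omega
      exact ⟨P, S, rfl, hPp, c1_done hPp hl, Relation.EqvGen.refl _⟩
  | succ T ih =>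
      intro s m P S hsum hl
      have hnd : (P ++ (s+m) :: S).Nodup := perm_range_nodup hl
      have hndP : P.Nodup := (List.nodup_append'.1 hnd).1
      have hdisj : List.Disjoint P ((s+m) :: S) := (List.nodup_append'.1 hnd).2.2
      have hb : ∀ v ∈ P, s + 1 ≤ v := fun v hv =>
        (perm_range_bounds hl v (List.mem_append_left _ hv)).1
      by_cases hPp : P.Perm (List.range' (s+1) P.length)
      · exact ⟨P, S, rfl, hPp, c1_done hPp hl, Relation.EqvGen.refl _⟩
      obtain ⟨v, hvP, hv2, hv1P⟩ := find_gap hndP hb hPp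
      have hvl : v ∈ P ++ (s+m) :: S := List.mem_append_left _ hvP
      have hvb := perm_range_bounds hl v hvl
      have hvM : v ≠ s + m := fun e => hdisj hvP (e ▸ List.mem_cons_self)
      have hvlt : v < s + m := by omega
      set i := v - 1 with hidef
      have hi1v : i + 1 = v := by omega
      have hib : s + 1 ≤ i ∧ i < s + m := by omega
      have hil : i ∈ P ++ (s+m) :: S := hl.mem_iff.2 (List.mem_range'_1.2 ⟨hib.1, by omega⟩)
      have hiM : i ≠ s + m := by omega
      have hiS : i ∈ S := by
        rcases List.mem_append.1 hil with h | h
        · exact absurd h hv1P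
        · rcases List.mem_cons.1 h with h | h
          · exact absurd h hiM
          · exact h
      -- index computations
      have eidxv : (P ++ (s+m) :: S).idxOf v = P.idxOf v := List.idxOf_append_of_mem hvP
      have hvidx : P.idxOf v < P.length := List.idxOf_lt_length_iff.2 hvP
      have eidxM : (P ++ (s+m) :: S).idxOf (s+m) = P.length := by
        have hMP : (s+m) ∉ P := fun h => hdisj h (List.mem_cons_self)
        rw [List.idxOf_append_of_notMem hMP, List.idxOf_cons_self]; omega
      have eidxi : (P ++ (s+m) :: S).idxOf i = P.length + (S.idxOf i + 1) := by
        have hiP : i ∉ P := hv1P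
        rw [List.idxOf_append_of_notMem hiP, List.idxOf_cons_ne _ (Ne.symm hiM)]
      have happ : ToggleApplies i (P ++ (s+m) :: S) := by
        refine ⟨s + m, List.mem_append_right _ (List.mem_cons_self), by omega, ?_, ?_⟩
        · rw [eidxM, eidxi, hi1v, eidxv]
          have : min (P.length + (S.idxOf i + 1)) (P.idxOf v) = P.idxOf v := by omega
          rw [this]; omega
        · rw [eidxM, eidxi, hi1v, eidxv]
          have : max (P.length + (S.idxOf i + 1)) (P.idxOf v) =
            P.length + (S.idxOf i + 1) := by omega
          rw [this]; omega
      have hstep : StepV s m (P ++ (s+m) :: S) (toggle i (P ++ (s+m) :: S)) :=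
        ⟨i, hib.1, by omega, rfl⟩
      have etog : toggle i (P ++ (s+m) :: S) = P.map (sf i) ++ (s+m) :: S.map (sf i) := by
        rw [toggle_pos happ]
        show (P ++ (s+m) :: S).map (sf i) = P.map (sf i) ++ (s+m) :: S.map (sf i)
        rw [List.map_append, List.map_cons, sf_eq_self (by omega) (by omega)]
      have hperm' : (P.map (sf i) ++ (s+m) :: S.map (sf i)).Perm (List.range' (s+1) m) := by
        rw [← etog]
        have hi_mem : i ∈ P ++ (s+m)::S := hil
        have hi1_mem : i + 1 ∈ P ++ (s+m)::S := by rw [hi1v]; exact hvl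
        exact (toggle_perm hnd hi_mem hi1_mem).trans hl
      have hsum' : (P.map (sf i)).sum ≤ T := by
        have := sum_map_sf hndP (by rw [hi1v]; exact hvP) hv1P
        omega
      obtain ⟨P₁, S₁, hlen1, hperm1, hperm2, hchain⟩ :=
        ih s m (P.map (sf i)) (S.map (sf i)) hsum' hperm'
      rw [List.length_map] at hlen1 hperm1 hperm2
      refine ⟨P₁, S₁, hlen1, hperm1, hperm2, ?_⟩
      exact Relation.EqvGen.trans _ _ _
        (Relation.EqvGen.rel _ _ hstep) (etog ▸ hchain)

end Poly
namespace Poly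

theorem avoids_nil : Avoids231 [] := by
  rintro ⟨j1, j2, j3, _, _, h3, _, _⟩
  simp at h3

theorem connect_aux (K : ℕ) : ∀ (m s : ℕ) (l : List ℕ), m ≤ K →
    l.Perm (List.range' (s+1) m) →
    ∃ e, e.Perm (List.range' (s+1) m) ∧ Relation.EqvGen (StepV s m) l e ∧ Avoids231 e := by
  induction K with
  | zero =>
      intro m s l hm hl
      have hm0 : m = 0 := by omega
      subst hm0
      have : l = [] := by simpa using hl
      subst this
      exact ⟨[], by simpa using hl, Relation.EqvGen.refl _, avoids_nil⟩
  | succ K ih =>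
      intro m s l hm hl
      rcases Nat.eq_zero_or_pos m with hm0 | hm1
      · subst hm0
        have : l = [] := by simpa using hl
        subst this
        exact ⟨[], by simpa using hl, Relation.EqvGen.refl _, avoids_nil⟩
      have hMl : s + m ∈ l := hl.mem_iff.2 (List.mem_range'_1.2 ⟨by omega, by omega⟩)
      set k := l.idxOf (s+m) with hkdef
      set P := l.take k with hPdef
      set S := l.drop (k+1) with hSdef
      have hdec : l = P ++ (s+m) :: S := decomp l hMl
      have hl' : (P ++ (s+m) :: S).Perm (List.range' (s+1) m) := hdec ▸ hl
      obtain ⟨P₁, S₁, hlen1, hP1, hS1, hchain1⟩ := c1_aux P.sum s m P S le_rfl hl'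
      set p := P.length with hpdef
      have hp_lt : p < m := by
        have := perm_range_length hl'
        rw [len_decomp] at this
        omega
      obtain ⟨eP, hePperm, chainP, hePav⟩ := ih p s P₁ (by omega) hP1
      have hePb := perm_range_bounds hePperm
      have hS1b := perm_range_bounds hS1
      -- lift the prefix chain
      have hznd : ((s+m) :: S₁).Nodup := by
        rw [List.nodup_cons]
        refine ⟨fun h => ?_, perm_range_nodup hS1⟩
        have := hS1b _ h
        omega
      have chain2 : Relation.EqvGen (StepV s m) (P₁ ++ (s+m) :: S₁) (eP ++ (s+m) :: S₁) :=
        lift_left (le_of_lt hp_lt) hznd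
          (fun v hv => by
            rcases List.mem_cons.1 hv with h | h
            · omega
            · have := hS1b _ h; omega)
          chainP hP1
      -- lift the suffix chain
      have hS1' : S₁.Perm (List.range' ((s+p)+1) (m-1-p)) := by
        have e : s + 1 + p = s + p + 1 := by omega
        rwa [e] at hS1
      obtain ⟨eS, heSperm, chainS, heSav⟩ := ih (m-1-p) (s+p) S₁ (by omega) hS1'
      have heSb := perm_range_bounds heSperm
      have hznd' : (eP ++ [s+m]).Nodup := by
        rw [List.nodup_append']
        refine ⟨perm_range_nodup hePperm, List.nodup_singleton _, fun v hv hv' => ?_⟩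
        have := hePb v hv
        have : v = s + m := List.mem_singleton.1 hv'
        omega
      have chain3' : Relation.EqvGen (StepV s m) ((eP ++ [s+m]) ++ S₁) ((eP ++ [s+m]) ++ eS) :=
        lift_right (by omega) (by omega) hznd'
          (fun v hv => by
            rcases List.mem_append.1 hv with h | h
            · have := hePb v h; omega
            · have : v = s + m := List.mem_singleton.1 h; omega)
          chainS hS1'
      have eassoc : ∀ (X : List ℕ), (eP ++ [s+m]) ++ X = eP ++ (s+m) :: X := by
        intro X; simp
      rw [eassoc, eassoc] at chain3'
      -- assemble
      refine ⟨eP ++ (s+m) :: eS, ?_, ?_, ?_⟩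
      · -- permutation property
        have s1 : (eP ++ (s+m) :: eS).Perm (List.range' (s+1) p ++ (s+m) :: eS) :=
          hePperm.append_right _
        have s2 : ((s+m) :: eS).Perm ((s+m) :: List.range' (s+p+1) (m-1-p)) :=
          heSperm.cons _
        have s3 : ((s+m) :: List.range' (s+1+p) (m-1-p)).Perm (List.range' (s+1+p) (m-p)) :=
          range_tail_perm hp_lt
        have e : s + 1 + p = s + p + 1 := by omega
        rw [e] at s3
        have s4 : (List.range' (s+1) p ++ (s+m) :: eS).Perm
            (List.range' (s+1) p ++ List.range' (s+p+1) (m-p)) :=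
          (s2.trans s3).append_left _
        have s5 : List.range' (s+1) p ++ List.range' (s+p+1) (m-p) = List.range' (s+1) m := by
          have := range_append (s := s) (p := p) (m := m) (le_of_lt hp_lt)
          rwa [show s + 1 + p = s + p + 1 by omega] at this
        exact s1.trans (s4.trans (s5 ▸ List.Perm.refl _))
      · -- chain
        have c0 : Relation.EqvGen (StepV s m) l (P ++ (s+m) :: S) := by
          rw [← hdec]; exact Relation.EqvGen.refl _
        exact Relation.EqvGen.trans _ _ _ c0
          (Relation.EqvGen.trans _ _ _ hchain1
            (Relation.EqvGen.trans _ _ _ chain2 chain3'))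
      · -- avoidance
        refine avoids_compose hePav heSav ?_ ?_ ?_
        · intro x hx; have := hePb x hx; omega
        · intro y hy; have := heSb y hy; omega
        · intro x hx y hy
          have := hePb x hx
          have := heSb y hy
          omega

end Poly
namespace Poly

theorem stepV_iff_toggleStep (n : ℕ) (x y : List ℕ) : StepV 0 n x y ↔ ToggleStep n x y := by
  constructor
  · rintro ⟨i, h1, h2, rfl⟩
    exact ⟨i, by omega, by omega, rfl⟩
  · rintro ⟨i, h1, h2, rfl⟩
    exact ⟨i, by omega, by omega, rfl⟩

theorem toggleStep_symm {n : ℕ} {x y : List ℕ} (h : ToggleStep n x y) : ToggleStep n y x := by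
  obtain ⟨i, h1, h2, rfl⟩ := h
  exact ⟨i, h1, h2, (toggle_toggle i x).symm⟩

theorem permList_mem {n i : ℕ} {x : List ℕ} (hx : IsPermList n x)
    (h1 : 1 ≤ i) (h2 : i ≤ n - 1) : i ∈ x ∧ i + 1 ∈ x :=
  ⟨hx.mem_iff.2 (List.mem_range'_1.2 ⟨h1, by omega⟩),
    hx.mem_iff.2 (List.mem_range'_1.2 ⟨by omega, by omega⟩)⟩

theorem step_preserve {n : ℕ} {x y : List ℕ} (h : ToggleStep n x y) (hx : IsPermList n x) :
    IsPermList n y ∧ Phi x = Phi y := by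
  obtain ⟨i, h1, h2, rfl⟩ := h
  obtain ⟨hi, hi1⟩ := permList_mem hx h1 h2
  have hnd : x.Nodup := hx.nodup_iff.2 (List.nodup_range')
  exact ⟨(toggle_perm hnd hi hi1).trans hx, (phi_toggle hnd hi hi1).symm⟩

theorem orbit_preserve {n : ℕ} {x y : List ℕ} (h : OrbitRel n x y) :
    (IsPermList n x ↔ IsPermList n y) ∧ (IsPermList n x → Phi x = Phi y) := by
  induction h with
  | rel a b hab =>
      exact ⟨⟨fun h => (step_preserve hab h).1,
        fun h => (step_preserve (toggleStep_symm hab) h).1⟩,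
        fun h => (step_preserve hab h).2⟩
  | refl a => exact ⟨Iff.rfl, fun _ => rfl⟩
  | symm a b _ ih =>
      exact ⟨ih.1.symm, fun hb => (ih.2 (ih.1.2 hb)).symm⟩
  | trans a b c _ _ ih1 ih2 =>
      exact ⟨ih1.1.trans ih2.1, fun ha => (ih1.2 ha).trans (ih2.2 (ih1.1.1 ha))⟩

theorem phi_fix' {n : ℕ} {l : List ℕ} (hl : IsPermList n l) (hA : Avoids231 l) :
    Phi l = l := phi_fix_aux n n l le_rfl hl hA

theorem part231 (n : ℕ) (l : List ℕ) (hl : IsPermList n l) :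
    ∃! m, IsPermList n m ∧ OrbitRel n l m ∧ Avoids231 m := by
  have hl0 : l.Perm (List.range' (0+1) n) := hl
  obtain ⟨e, heperm, hchain, heav⟩ := connect_aux n n 0 l le_rfl hl0
  have heP : IsPermList n e := heperm
  have horb : OrbitRel n l e :=
    Relation.EqvGen.mono (fun a b h => (stepV_iff_toggleStep n a b).1 h) _ _ hchain
  refine ⟨e, ⟨heP, horb, heav⟩, ?_⟩
  rintro y ⟨hyP, hyorb, hyav⟩
  have h1 : Phi l = Phi y := (orbit_preserve hyorb).2 hl
  have h2 : Phi l = Phi e := (orbit_preserve horb).2 hl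
  have h3 : Phi y = y := phi_fix' hyP hyav
  have h4 : Phi e = e := phi_fix' heP heav
  rw [← h3, ← h1, h2, h4]

theorem indexOf_reverse {l : List ℕ} (hnd : l.Nodup) {v : ℕ} (hv : v ∈ l) :
    l.reverse.idxOf v = l.length - 1 - l.idxOf v := by
  have hj : l.idxOf v < l.length := List.idxOf_lt_length_iff.2 hv
  have hvr : v ∈ l.reverse := List.mem_reverse.2 hv
  have ht : l.reverse.idxOf v < l.reverse.length := List.idxOf_lt_length_iff.2 hvr
  have htl : l.reverse.idxOf v < l.length := by rwa [List.length_reverse] at ht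
  have e1 : l.reverse[l.reverse.idxOf v]'ht = v := List.getElem_idxOf ht
  have e2 : l.reverse[l.reverse.idxOf v]'ht = l[l.length - 1 - l.reverse.idxOf v]'(by omega) :=
    List.getElem_reverse ht
  have e3 : l[l.idxOf v]'hj = v := List.getElem_idxOf hj
  have e4 : l[l.length - 1 - l.reverse.idxOf v]'(by omega) = l[l.idxOf v]'hj := by
    rw [← e2, e1, e3]
  have := (hnd.getElem_inj_iff).1 e4
  omega

theorem toggleApplies_reverse {i : ℕ} {l : List ℕ} (hnd : l.Nodup) (hi : i ∈ l)
    (hi1 : i + 1 ∈ l) (h : ToggleApplies i l) : ToggleApplies i l.reverse := by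
  obtain ⟨a, ha, hgt, h1, h2⟩ := h
  have hxi : l.idxOf i < l.length := List.idxOf_lt_length_iff.2 hi
  have hxi1 : l.idxOf (i+1) < l.length := List.idxOf_lt_length_iff.2 hi1
  have hxa : l.idxOf a < l.length := List.idxOf_lt_length_iff.2 ha
  refine ⟨a, List.mem_reverse.2 ha, hgt, ?_, ?_⟩
  · rw [indexOf_reverse hnd hi, indexOf_reverse hnd hi1, indexOf_reverse hnd ha]
    omega
  · rw [indexOf_reverse hnd hi, indexOf_reverse hnd hi1, indexOf_reverse hnd ha]
    omega

theorem toggle_reverse {i : ℕ} {l : List ℕ} (hnd : l.Nodup) (hi : i ∈ l) (hi1 : i + 1 ∈ l) :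
    toggle i l.reverse = (toggle i l).reverse := by
  by_cases h : ToggleApplies i l
  · rw [toggle_pos h, toggle_pos (toggleApplies_reverse hnd hi hi1 h)]
    show (l.reverse).map (sf i) = (l.map (sf i)).reverse
    rw [List.map_reverse]
  · have hrev : ¬ ToggleApplies i l.reverse := by
      intro hr
      have := toggleApplies_reverse (List.nodup_reverse.2 hnd)
        (List.mem_reverse.2 hi) (List.mem_reverse.2 hi1) hr
      rw [List.reverse_reverse] at this
      exact h this
    rw [toggle_neg h, toggle_neg hrev]

theorem orbit_reverse {n : ℕ} {x y : List ℕ} (h : OrbitRel n x y) :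
    (IsPermList n x ↔ IsPermList n y) ∧
      (IsPermList n x → OrbitRel n x.reverse y.reverse) := by
  induction h with
  | rel a b hab =>
      refine ⟨⟨fun h => (step_preserve hab h).1,
        fun h => (step_preserve (toggleStep_symm hab) h).1⟩, fun h => ?_⟩
      obtain ⟨i, h1, h2, rfl⟩ := hab
      obtain ⟨hi, hi1⟩ := permList_mem h h1 h2
      have hnd : a.Nodup := h.nodup_iff.2 (List.nodup_range')
      exact Relation.EqvGen.rel _ _ ⟨i, h1, h2, (toggle_reverse hnd hi hi1).symm⟩
  | refl a => exact ⟨Iff.rfl, fun _ => Relation.EqvGen.refl _⟩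
  | symm a b _ ih =>
      exact ⟨ih.1.symm, fun hb => Relation.EqvGen.symm _ _ (ih.2 (ih.1.2 hb))⟩
  | trans a b c _ _ ih1 ih2 =>
      exact ⟨ih1.1.trans ih2.1,
        fun ha => Relation.EqvGen.trans _ _ _ (ih1.2 ha) (ih2.2 (ih1.1.1 ha))⟩

theorem getD_reverse {l : List ℕ} {p : ℕ} (h : p < l.length) :
    l.reverse.getD p 0 = l.getD (l.length - 1 - p) 0 := by
  rw [List.getD_eq_getElem _ _ (by rw [List.length_reverse]; exact h),
      List.getD_eq_getElem _ _ (show l.length - 1 - p < l.length by omega),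
      List.getElem_reverse]

theorem avoids132_iff_reverse {m : List ℕ} : Avoids132 m ↔ Avoids231 m.reverse := by
  unfold Avoids132 Avoids231 Contains231
  constructor
  · intro h
    rintro ⟨q1, q2, q3, h12, h23, h3, hv1, hv2⟩
    rw [List.length_reverse] at h3
    apply h
    rw [getD_reverse (show q1 < m.length by omega)] at hv1 hv2
    rw [getD_reverse (show q3 < m.length by omega)] at hv1
    rw [getD_reverse (show q2 < m.length by omega)] at hv2
    exact ⟨m.length - 1 - q3, m.length - 1 - q2, m.length - 1 - q1,
      by omega, by omega, by omega, hv1, hv2⟩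
  · intro h
    rintro ⟨j1, j2, j3, h12, h23, h3, hv1, hv2⟩
    apply h
    refine ⟨m.length - 1 - j3, m.length - 1 - j2, m.length - 1 - j1,
      by omega, by omega, by rw [List.length_reverse]; omega, ?_, ?_⟩
    · rw [getD_reverse (show m.length - 1 - j1 < m.length by omega),
        getD_reverse (show m.length - 1 - j3 < m.length by omega)]
      rw [show m.length - 1 - (m.length - 1 - j1) = j1 by omega,
        show m.length - 1 - (m.length - 1 - j3) = j3 by omega]
      exact hv1
    · rw [getD_reverse (show m.length - 1 - j3 < m.length by omega),
        getD_reverse (show m.length - 1 - j2 < m.length by omega)]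
      rw [show m.length - 1 - (m.length - 1 - j3) = j3 by omega,
        show m.length - 1 - (m.length - 1 - j2) = j2 by omega]
      exact hv2

end Poly

/-- Every orbit of `𝒫ₙ` acting on `Sₙ` contains exactly one 231-avoiding permutation and
exactly one 132-avoiding permutation. -/
theorem orbit_unique_avoiders (n : ℕ) (l : List ℕ) (hl : IsPermList n l) :
    (∃! m, IsPermList n m ∧ OrbitRel n l m ∧ Avoids231 m) ∧
      (∃! m, IsPermList n m ∧ OrbitRel n l m ∧ Avoids132 m) := by
  refine ⟨Poly.part231 n l hl, ?_⟩
  have hlrev : IsPermList n l.reverse := (List.reverse_perm l).trans hl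
  obtain ⟨e, ⟨heP, heorb, heav⟩, huniq⟩ := Poly.part231 n l.reverse hlrev
  have horb' : OrbitRel n l e.reverse := by
    have := (Poly.orbit_reverse heorb).2 hlrev
    rwa [List.reverse_reverse] at this
  refine ⟨e.reverse, ⟨(List.reverse_perm e).trans heP, horb', ?_⟩, ?_⟩
  · rw [Poly.avoids132_iff_reverse, List.reverse_reverse]
    exact heav
  · rintro y ⟨hyP, hyorb, hyav⟩
    have hyrev : y.reverse = e := by
      refine huniq y.reverse ⟨(List.reverse_perm y).trans hyP, ?_, ?_⟩
      · exact (Poly.orbit_reverse hyorb).2 hl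
      · exact (Poly.avoids132_iff_reverse).1 hyav
    rw [← hyrev, List.reverse_reverse]
end

section
/- If σ ∈ S_n and i ∈ [n-1] are such that p_i(s(σ)) = swap_i(s(σ)) (i.e., the toggle acts nontrivially on s(σ)), then p_i(σ) = swap_i(σ) and s(p_i(σ)) = p_i(s(σ)). -/
lemma max_getD_mem (l : List ℕ) (h : l ≠ []) : l.max?.getD 0 ∈ l := by
  rcases hm : l.max? with _ | m'
  · exact absurd (List.max?_eq_none_iff.mp hm) h
  · simpa using List.max?_mem hm

lemma length_takeWhile_lt (p : ℕ → Bool) (l : List ℕ) (x : ℕ) (hx : x ∈ l) (hpx : p x = false) :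
    (l.takeWhile p).length < l.length := by
  rcases Nat.lt_or_ge (l.takeWhile p).length l.length with h | h
  · exact h
  · have := List.takeWhile_eq_self_iff.mp ((List.takeWhile_sublist p).eq_of_length_le h) x hx
    rw [hpx] at this; exact absurd this (by simp)

lemma length_dropWhile_tail_lt (p : ℕ → Bool) (l : List ℕ) (h : l ≠ []) :
    ((l.dropWhile p).tail).length < l.length := by
  have h1 : (l.dropWhile p).length ≤ l.length := (List.dropWhile_sublist _).length_le
  have h2 : ((l.dropWhile p).tail).length ≤ (l.dropWhile p).length - 1 := by
    simp [List.length_tail]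
  have : 0 < l.length := List.length_pos_iff.mpr h
  omega

/-- West's stack-sorting map `s`: `s([]) = []` and `s(LmR) = s(L) s(R) m`,
where `m` is the largest entry. -/
def stackSort : List ℕ → List ℕ
  | [] => []
  | a :: rest =>
    stackSort ((a :: rest).takeWhile (· ≠ (a :: rest).max?.getD 0)) ++
      stackSort (((a :: rest).dropWhile (· ≠ (a :: rest).max?.getD 0)).tail) ++
      [(a :: rest).max?.getD 0]
termination_by l => l.length
decreasing_by
  · exact length_takeWhile_lt _ _ _ (max_getD_mem (a :: rest) (by simp)) (by simp)
  · exact length_dropWhile_tail_lt _ _ (by simp)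

-- ### auxiliary lemmas
open List in
example : True := trivial
open List

lemma max_spec (l : List ℕ) (h : l ≠ []) :
    l.max?.getD 0 ∈ l ∧ ∀ x ∈ l, x ≤ l.max?.getD 0 := by
  rcases hm : l.max? with _ | m
  · exact absurd (List.max?_eq_none_iff.mp hm) h
  · have := List.max?_eq_some_iff.mp hm
    simpa using this

lemma max_eq {l : List ℕ} {m : ℕ} (hm : m ∈ l) (hle : ∀ x ∈ l, x ≤ m) :
    l.max?.getD 0 = m := by
  obtain ⟨h1, h2⟩ := max_spec l (List.ne_nil_of_mem hm)
  exact le_antisymm (hle _ h1) (h2 _ hm)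

lemma stackSort_eq (l : List ℕ) (h : l ≠ []) :
    stackSort l = stackSort (l.takeWhile (· ≠ l.max?.getD 0)) ++
      stackSort ((l.dropWhile (· ≠ l.max?.getD 0)).tail) ++ [l.max?.getD 0] := by
  cases l with
  | nil => exact absurd rfl h
  | cons a t => rw [stackSort]

lemma takeWhile_append_all {p : ℕ → Bool} {L : List ℕ} (l : List ℕ)
    (h : ∀ x ∈ L, p x = true) : (L ++ l).takeWhile p = L ++ l.takeWhile p := by
  induction L with
  | nil => simp
  | cons a t ih =>
    simp only [List.cons_append, List.takeWhile_cons, h a (by simp)]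
    simp [ih fun x hx => h x (by simp [hx])]

lemma dropWhile_append_all {p : ℕ → Bool} {L : List ℕ} (l : List ℕ)
    (h : ∀ x ∈ L, p x = true) : (L ++ l).dropWhile p = l.dropWhile p := by
  induction L with
  | nil => simp
  | cons a t ih =>
    simp only [List.cons_append, List.dropWhile_cons, h a (by simp)]
    simp [ih fun x hx => h x (by simp [hx])]

lemma exists_split {m : ℕ} {l : List ℕ} (hm : m ∈ l) :
    l = l.takeWhile (· ≠ m) ++ m :: (l.dropWhile (· ≠ m)).tail := by
  have hd : l.dropWhile (· ≠ m) ≠ [] := by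
    intro h
    have := List.dropWhile_eq_nil_iff.mp h m hm
    simp at this
  have h0 : 0 < (l.dropWhile (· ≠ m)).length := List.length_pos_iff.mpr hd
  have hhead := List.dropWhile_get_zero_not (· ≠ m) l h0
  have hm' : (l.dropWhile (· ≠ m)).get ⟨0, h0⟩ = m := by simpa using hhead
  conv_lhs => rw [← List.takeWhile_append_dropWhile (p := (· ≠ m)) (l := l)]
  congr 1
  cases he : l.dropWhile (· ≠ m) with
  | nil => exact absurd he hd
  | cons a t =>
    have : a = m := by
      have h2 := (List.get_of_eq he ⟨0, h0⟩).symm.trans hm'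
      simpa using h2
    simp [this]

lemma stackSort_decomp (L R : List ℕ) (m : ℕ) (hL : ∀ x ∈ L, x < m) (hR : ∀ x ∈ R, x < m) :
    stackSort (L ++ m :: R) = stackSort L ++ stackSort R ++ [m] := by
  have hmax : (L ++ m :: R).max?.getD 0 = m := by
    apply max_eq (by simp)
    intro x hx
    rcases List.mem_append.mp hx with h | h
    · exact (hL x h).le
    · rcases List.mem_cons.mp h with rfl | h
      · exact le_refl _
      · exact (hR x h).le
  have hall : ∀ x ∈ L, (decide (x ≠ m)) = true := fun x hx => by
    simp [(hL x hx).ne]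
  rw [stackSort_eq _ (by simp), hmax]
  rw [takeWhile_append_all _ hall, dropWhile_append_all _ hall]
  have h1 : (m :: R).takeWhile (· ≠ m) = [] := by simp [List.takeWhile_cons]
  have h2 : (m :: R).dropWhile (· ≠ m) = m :: R := by simp [List.dropWhile_cons]
  rw [h1, h2]
  simp

theorem stackSort_perm (l : List ℕ) : (stackSort l).Perm l := by
  rcases eq_or_ne l [] with rfl | h
  · simp [stackSort]
  · have hmem : l.max?.getD 0 ∈ l := max_getD_mem l h
    set m := l.max?.getD 0 with hmdef
    have h1 := stackSort_perm (l.takeWhile (· ≠ m))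
    have h2 := stackSort_perm ((l.dropWhile (· ≠ m)).tail)
    rw [stackSort_eq l h, ← hmdef]
    calc stackSort (l.takeWhile (· ≠ m)) ++ stackSort ((l.dropWhile (· ≠ m)).tail) ++ [m]
        ~ l.takeWhile (· ≠ m) ++ (l.dropWhile (· ≠ m)).tail ++ [m] :=
          (h1.append h2).append (List.Perm.refl _)
      _ ~ l.takeWhile (· ≠ m) ++ (m :: (l.dropWhile (· ≠ m)).tail) := by
          rw [List.append_assoc]
          exact List.Perm.append_left _ (List.perm_append_singleton _ _)
      _ = l := (exists_split hmem).symm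
termination_by l.length
decreasing_by
  · exact length_takeWhile_lt _ _ _ hmem (by simp)
  · exact length_dropWhile_tail_lt _ _ h

lemma swap_eq_self {i : ℕ} {l : List ℕ} (h : i ∉ l) (h' : i + 1 ∉ l) :
    swapEntries i l = l := by
  unfold swapEntries
  have : ∀ x ∈ l, (if x = i then i + 1 else if x = i + 1 then i else x) = x := by
    intro x hx
    rw [if_neg (by rintro rfl; exact h hx), if_neg (by rintro rfl; exact h' hx)]
  rw [List.map_congr_left this]; exact List.map_id' l

lemma swap_append (i : ℕ) (l₁ l₂ : List ℕ) :
    swapEntries i (l₁ ++ l₂) = swapEntries i l₁ ++ swapEntries i l₂ := by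
  simp [swapEntries]

lemma swap_cons (i x : ℕ) (l : List ℕ) :
    swapEntries i (x :: l) =
      (if x = i then i + 1 else if x = i + 1 then i else x) :: swapEntries i l := by
  simp [swapEntries]

lemma mem_swap_lt {i m : ℕ} {l : List ℕ} (h : ∀ x ∈ l, x < m) (him : i + 1 < m) :
    ∀ y ∈ swapEntries i l, y < m := by
  intro y hy
  simp only [swapEntries, List.mem_map] at hy
  obtain ⟨x, hx, rfl⟩ := hy
  have := h x hx
  split_ifs <;> omega

lemma swap_eq_map₁ {i : ℕ} {l : List ℕ} (h : i + 1 ∉ l) :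
    swapEntries i l = l.map (fun x => if x = i then i + 1 else x) := by
  apply List.map_congr_left
  intro x hx
  rcases eq_or_ne x i with rfl | hxi
  · simp
  · rw [if_neg hxi, if_neg (by rintro rfl; exact h hx), if_neg hxi]

lemma swap_eq_map₂ {i : ℕ} {l : List ℕ} (h : i ∉ l) :
    swapEntries i l = l.map (fun x => if x = i + 1 then i else x) := by
  apply List.map_congr_left
  intro x hx
  rw [if_neg (by rintro rfl; exact h hx)]

lemma indexOf_middle {l₁ l₂ l₃ : List ℕ} {x : ℕ} (hx : x ∈ l₂) (hx1 : x ∉ l₁) :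
    (l₁ ++ l₂ ++ l₃).idxOf x = l₁.length + l₂.idxOf x := by
  rw [List.append_assoc, List.idxOf_append_of_notMem hx1, List.idxOf_append_of_mem hx]

lemma toggleApplies_middle {i : ℕ} {l₁ l₂ l₃ : List ℕ}
    (hi : i ∈ l₂) (hi1 : i + 1 ∈ l₂) (hd : ∀ x ∈ l₂, x ∉ l₁) :
    ToggleApplies i (l₁ ++ l₂ ++ l₃) ↔ ToggleApplies i l₂ := by
  have hIi : (l₁ ++ l₂ ++ l₃).idxOf i = l₁.length + l₂.idxOf i :=
    indexOf_middle hi (hd i hi)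
  have hIi1 : (l₁ ++ l₂ ++ l₃).idxOf (i + 1) = l₁.length + l₂.idxOf (i + 1) :=
    indexOf_middle hi1 (hd _ hi1)
  have hlti : l₂.idxOf i < l₂.length := List.idxOf_lt_length_iff.mpr hi
  have hlti1 : l₂.idxOf (i + 1) < l₂.length := List.idxOf_lt_length_iff.mpr hi1
  constructor
  · rintro ⟨a, ha, hgt, h1, h2⟩
    have hal₁ : a ∉ l₁ := by
      intro hal
      have : (l₁ ++ l₂ ++ l₃).idxOf a < l₁.length := by
        rw [List.append_assoc, List.idxOf_append_of_mem hal]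
        exact List.idxOf_lt_length_iff.mpr hal
      omega
    have hIa : (l₁ ++ l₂ ++ l₃).idxOf a = l₁.length + (l₂ ++ l₃).idxOf a := by
      rw [List.append_assoc, List.idxOf_append_of_notMem hal₁]
    have hal₂ : a ∈ l₂ := by
      by_contra hal
      have : (l₂ ++ l₃).idxOf a = l₂.length + l₃.idxOf a :=
        List.idxOf_append_of_notMem hal
      omega
    have hIa' : (l₂ ++ l₃).idxOf a = l₂.idxOf a := List.idxOf_append_of_mem hal₂
    exact ⟨a, hal₂, hgt, by omega, by omega⟩
  · rintro ⟨a, ha, hgt, h1, h2⟩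
    have hIa : (l₁ ++ l₂ ++ l₃).idxOf a = l₁.length + l₂.idxOf a :=
      indexOf_middle ha (hd a ha)
    exact ⟨a, by simp [ha], hgt, by omega, by omega⟩

lemma takeWhile_congr' {p q : ℕ → Bool} : ∀ (l : List ℕ), (∀ x ∈ l, p x = q x) →
    l.takeWhile p = l.takeWhile q
  | [], _ => rfl
  | a :: t, h => by
    simp only [List.takeWhile_cons, h a (by simp)]
    rw [takeWhile_congr' t fun x hx => h x (by simp [hx])]

lemma dropWhile_congr' {p q : ℕ → Bool} : ∀ (l : List ℕ), (∀ x ∈ l, p x = q x) →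
    l.dropWhile p = l.dropWhile q
  | [], _ => rfl
  | a :: t, h => by
    simp only [List.dropWhile_cons, h a (by simp)]
    rw [dropWhile_congr' t fun x hx => h x (by simp [hx])]

theorem stackSort_map (f : ℕ → ℕ) (l : List ℕ)
    (hf : ∀ a ∈ l, ∀ b ∈ l, a < b → f a < f b) :
    stackSort (l.map f) = (stackSort l).map f := by
  rcases eq_or_ne l [] with rfl | h
  · simp [stackSort]
  · obtain ⟨hmem, hle⟩ := max_spec l h
    set m := l.max?.getD 0 with hmdef
    have hfle : ∀ y ∈ l.map f, y ≤ f m := by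
      intro y hy
      obtain ⟨x, hx, rfl⟩ := List.mem_map.mp hy
      rcases eq_or_lt_of_le (hle x hx) with rfl | hlt
      · exact le_refl _
      · exact (hf x hx m hmem hlt).le
    have hmax : (l.map f).max?.getD 0 = f m := max_eq (List.mem_map_of_mem hmem) hfle
    have hne : l.map f ≠ [] := by simpa using h
    have hcongr : ∀ x ∈ l, (decide (f x ≠ f m)) = (decide (x ≠ m)) := by
      intro x hx
      rcases eq_or_ne x m with rfl | hxm
      · simp
      · have : x < m := lt_of_le_of_ne (hle x hx) hxm
        have : f x < f m := hf x hx m hmem this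
        simp [hxm, this.ne]
    have ht : (l.map f).takeWhile (· ≠ f m) = (l.takeWhile (· ≠ m)).map f := by
      rw [List.takeWhile_map]
      exact congrArg _ (takeWhile_congr' l hcongr)
    have hd : (l.map f).dropWhile (· ≠ f m) = (l.dropWhile (· ≠ m)).map f := by
      rw [List.dropWhile_map]
      exact congrArg _ (dropWhile_congr' l hcongr)
    have hsub₁ : ∀ x ∈ l.takeWhile (· ≠ m), x ∈ l := fun x hx =>
      (List.takeWhile_sublist _).mem hx
    have hsub₂ : ∀ x ∈ (l.dropWhile (· ≠ m)).tail, x ∈ l := fun x hx =>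
      ((List.tail_sublist _).trans (List.dropWhile_sublist _)).mem hx
    rw [stackSort_eq _ hne, stackSort_eq l h, ← hmdef, hmax, ht, hd, ← List.map_tail,
      stackSort_map f _ (fun a ha b hb => hf a (hsub₁ a ha) b (hsub₁ b hb)),
      stackSort_map f _ (fun a ha b hb => hf a (hsub₂ a ha) b (hsub₂ b hb))]
    simp
termination_by l.length
decreasing_by
  · exact length_takeWhile_lt _ _ _ hmem (by simp)
  · exact length_dropWhile_tail_lt _ _ h

theorem key (i : ℕ) (l : List ℕ) (hnd : l.Nodup) (hi : i ∈ l) (hi1 : i + 1 ∈ l)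
    (h : ToggleApplies i (stackSort l)) :
    ToggleApplies i l ∧ stackSort (swapEntries i l) = swapEntries i (stackSort l) := by
  have hne : l ≠ [] := List.ne_nil_of_mem hi
  obtain ⟨m, hmdef⟩ : ∃ m, l.max?.getD 0 = m := ⟨_, rfl⟩
  have hmem : m ∈ l := hmdef ▸ (max_spec l hne).1
  have hle : ∀ x ∈ l, x ≤ m := fun x hx => hmdef ▸ (max_spec l hne).2 x hx
  obtain ⟨t, r, hl, htw, hdw⟩ : ∃ t r, l = t ++ m :: r ∧ t = l.takeWhile (· ≠ m) ∧
      r = (l.dropWhile (· ≠ m)).tail := ⟨_, _, exists_split hmem, rfl, rfl⟩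
  have hs : stackSort l = stackSort t ++ stackSort r ++ [m] := by
    rw [stackSort_eq l hne, hmdef, ← htw, ← hdw]
  have hnd' : (t ++ m :: r).Nodup := hl ▸ hnd
  obtain ⟨hndt, hndmr, hdisj0⟩ := List.nodup_append.mp hnd'
  have hdisj : ∀ {a}, a ∈ t → a ∈ m :: r → False := fun ha hb => hdisj0 _ ha _ hb rfl
  have hmnr : m ∉ r := (List.nodup_cons.mp hndmr).1
  have hndr : r.Nodup := (List.nodup_cons.mp hndmr).2
  have hto : ∀ x ∈ t, x ≠ m := by
    intro x hx
    rw [htw] at hx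
    have h2 := List.mem_takeWhile_imp hx
    simp only [decide_eq_true_eq] at h2
    exact h2
  have hmt : m ∉ t := fun hx => hto m hx rfl
  have hlt_t : ∀ x ∈ t, x < m := fun x hx =>
    lt_of_le_of_ne (hle x (by rw [hl]; simp [hx])) (hto x hx)
  have hlt_r : ∀ x ∈ r, x < m := fun x hx =>
    lt_of_le_of_ne (hle x (by rw [hl]; simp [hx])) (fun he => hmnr (he ▸ hx))
  have hperm := stackSort_perm l
  have hpt := stackSort_perm t
  have hpr := stackSort_perm r
  have him : i + 1 < m := by
    rcases eq_or_lt_of_le (hle _ hi1) with he | hlt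
    · exfalso
      obtain ⟨a, ha, hgt, -, -⟩ := h
      have : a ≤ m := hle a (hperm.mem_iff.mp ha)
      omega
    · exact hlt
  have hmi : m ≠ i := by omega
  have hmi1 : m ≠ i + 1 := by omega
  have hlen : l.length = t.length + 1 + r.length := by rw [hl]; simp; omega
  have hmm1 : i ∉ [m] := by simp; omega
  have hmm2 : i + 1 ∉ [m] := by simp; omega
  have hloc : ∀ x, x ∈ l → x ≠ m → x ∈ t ∨ x ∈ r := by
    intro x hx hxm
    have hx' : x ∈ t ++ m :: r := by rw [← hl]; exact hx
    rcases List.mem_append.mp hx' with h' | h'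
    · exact Or.inl h'
    · rcases List.mem_cons.mp h' with he | h''
      · exact absurd he hxm
      · exact Or.inr h''
  rcases hloc i hi (by omega) with hit | hit <;> rcases hloc (i+1) hi1 (by omega) with hi1t | hi1t
  · -- both in t
    have hint_r : i ∉ m :: r := fun hx => hdisj hit hx
    have hin1_r : i + 1 ∉ m :: r := fun hx => hdisj hi1t hx
    have hinr : i ∉ r := fun hx => hint_r (by simp [hx])
    have hin1r : i + 1 ∉ r := fun hx => hin1_r (by simp [hx])
    have hist : i ∈ stackSort t := hpt.mem_iff.mpr hit
    have his1t : i + 1 ∈ stackSort t := hpt.mem_iff.mpr hi1t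
    have h' : ToggleApplies i (stackSort t) := by
      have h2 : ToggleApplies i ([] ++ stackSort t ++ (stackSort r ++ [m])) := by
        rw [List.nil_append, ← List.append_assoc, ← hs]; exact h
      exact (toggleApplies_middle hist his1t (by simp)).mp h2
    obtain ⟨hta, heq⟩ := key i t hndt hit hi1t h'
    have hisr : i ∉ stackSort r := fun hx => hinr (hpr.mem_iff.mp hx)
    have his1r : i + 1 ∉ stackSort r := fun hx => hin1r (hpr.mem_iff.mp hx)
    constructor
    · have h3 := (toggleApplies_middle (l₁ := ([] : List ℕ)) (l₃ := m :: r) hit hi1t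
        (by simp)).mpr hta
      rw [List.nil_append] at h3
      rw [hl]; exact h3
    · have hswl : swapEntries i l = swapEntries i t ++ m :: r := by
        rw [hl, swap_append, swap_eq_self hint_r hin1_r]
      rw [hswl, stackSort_decomp _ _ _ (mem_swap_lt hlt_t him) hlt_r, heq, hs,
        swap_append, swap_append, swap_eq_self hisr his1r, swap_eq_self hmm1 hmm2]
  · -- i in t, i+1 in r
    have hinr : i ∉ r := fun hx => hdisj hit (by simp [hx])
    have hin1t : i + 1 ∉ t := fun hx => hdisj hx (by simp [hi1t])
    constructor
    · have e1 : l.idxOf i = t.idxOf i := by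
        rw [hl]; exact List.idxOf_append_of_mem hit
      have e2 : l.idxOf m = t.length := by
        rw [hl, List.idxOf_append_of_notMem hmt, List.idxOf_cons_self]
        omega
      have e3 : l.idxOf (i+1) = t.length + 1 + r.idxOf (i+1) := by
        rw [hl, List.idxOf_append_of_notMem hin1t, List.idxOf_cons_ne _ hmi1]
        omega
      have hidx : t.idxOf i < t.length := List.idxOf_lt_length_iff.mpr hit
      refine ⟨m, hmem, him, ?_, ?_⟩ <;> rw [e1, e2, e3] <;> omega
    · have hswt : swapEntries i t = t.map (fun x => if x = i then i + 1 else x) :=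
        swap_eq_map₁ hin1t
      have hswr : swapEntries i r = r.map (fun x => if x = i + 1 then i else x) :=
        swap_eq_map₂ hinr
      have hmono1 : ∀ a ∈ t, ∀ b ∈ t, a < b →
          (if a = i then i + 1 else a) < (if b = i then i + 1 else b) := by
        intro a ha b hb hab
        have ha2 : a ≠ i + 1 := fun he => hin1t (he ▸ ha)
        have hb2 : b ≠ i + 1 := fun he => hin1t (he ▸ hb)
        split_ifs <;> omega
      have hmono2 : ∀ a ∈ r, ∀ b ∈ r, a < b →
          (if a = i + 1 then i else a) < (if b = i + 1 then i else b) := by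
        intro a ha b hb hab
        have ha2 : a ≠ i := fun he => hinr (he ▸ ha)
        have hb2 : b ≠ i := fun he => hinr (he ▸ hb)
        split_ifs <;> omega
      have hin1st : i + 1 ∉ stackSort t := fun hx => hin1t (hpt.mem_iff.mp hx)
      have hinsr : i ∉ stackSort r := fun hx => hinr (hpr.mem_iff.mp hx)
      have hst1 : stackSort (swapEntries i t) = swapEntries i (stackSort t) := by
        rw [hswt, stackSort_map _ _ hmono1, ← swap_eq_map₁ hin1st]
      have hst2 : stackSort (swapEntries i r) = swapEntries i (stackSort r) := by
        rw [hswr, stackSort_map _ _ hmono2, ← swap_eq_map₂ hinsr]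
      have hswl : swapEntries i l = swapEntries i t ++ m :: swapEntries i r := by
        rw [hl, swap_append, _root_.swap_cons, if_neg hmi, if_neg hmi1]
      rw [hswl, stackSort_decomp _ _ _ (mem_swap_lt hlt_t him) (mem_swap_lt hlt_r him),
        hst1, hst2, hs, swap_append, swap_append, swap_eq_self hmm1 hmm2]
  · -- i in r, i+1 in t
    have hint : i ∉ t := fun hx => hdisj hx (by simp [hit])
    have hin1r : i + 1 ∉ r := fun hx => hdisj hi1t (by simp [hx])
    constructor
    · have e1 : l.idxOf (i+1) = t.idxOf (i+1) := by
        rw [hl]; exact List.idxOf_append_of_mem hi1t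
      have e2 : l.idxOf m = t.length := by
        rw [hl, List.idxOf_append_of_notMem hmt, List.idxOf_cons_self]
        omega
      have e3 : l.idxOf i = t.length + 1 + r.idxOf i := by
        rw [hl, List.idxOf_append_of_notMem hint, List.idxOf_cons_ne _ hmi]
        omega
      have hidx : t.idxOf (i+1) < t.length := List.idxOf_lt_length_iff.mpr hi1t
      refine ⟨m, hmem, him, ?_, ?_⟩ <;> rw [e1, e2, e3] <;> omega
    · have hswt : swapEntries i t = t.map (fun x => if x = i + 1 then i else x) :=
        swap_eq_map₂ hint
      have hswr : swapEntries i r = r.map (fun x => if x = i then i + 1 else x) :=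
        swap_eq_map₁ hin1r
      have hmono1 : ∀ a ∈ t, ∀ b ∈ t, a < b →
          (if a = i + 1 then i else a) < (if b = i + 1 then i else b) := by
        intro a ha b hb hab
        have ha2 : a ≠ i := fun he => hint (he ▸ ha)
        have hb2 : b ≠ i := fun he => hint (he ▸ hb)
        split_ifs <;> omega
      have hmono2 : ∀ a ∈ r, ∀ b ∈ r, a < b →
          (if a = i then i + 1 else a) < (if b = i then i + 1 else b) := by
        intro a ha b hb hab
        have ha2 : a ≠ i + 1 := fun he => hin1r (he ▸ ha)
        have hb2 : b ≠ i + 1 := fun he => hin1r (he ▸ hb)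
        split_ifs <;> omega
      have hinst : i ∉ stackSort t := fun hx => hint (hpt.mem_iff.mp hx)
      have hin1sr : i + 1 ∉ stackSort r := fun hx => hin1r (hpr.mem_iff.mp hx)
      have hst1 : stackSort (swapEntries i t) = swapEntries i (stackSort t) := by
        rw [hswt, stackSort_map _ _ hmono1, ← swap_eq_map₂ hinst]
      have hst2 : stackSort (swapEntries i r) = swapEntries i (stackSort r) := by
        rw [hswr, stackSort_map _ _ hmono2, ← swap_eq_map₁ hin1sr]
      have hswl : swapEntries i l = swapEntries i t ++ m :: swapEntries i r := by
        rw [hl, swap_append, _root_.swap_cons, if_neg hmi, if_neg hmi1]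
      rw [hswl, stackSort_decomp _ _ _ (mem_swap_lt hlt_t him) (mem_swap_lt hlt_r him),
        hst1, hst2, hs, swap_append, swap_append, swap_eq_self hmm1 hmm2]
  · -- both in r
    have hint : i ∉ t := fun hx => hdisj hx (by simp [hit])
    have hin1t : i + 1 ∉ t := fun hx => hdisj hx (by simp [hi1t])
    have hisr : i ∈ stackSort r := hpr.mem_iff.mpr hit
    have his1r : i + 1 ∈ stackSort r := hpr.mem_iff.mpr hi1t
    have hdd : ∀ x ∈ stackSort r, x ∉ stackSort t := fun x hx hxt =>
      hdisj (hpt.mem_iff.mp hxt) (by simp [hpr.mem_iff.mp hx])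
    have h' : ToggleApplies i (stackSort r) :=
      (toggleApplies_middle hisr his1r hdd).mp (hs ▸ h)
    obtain ⟨hta, heq⟩ := key i r hndr hit hi1t h'
    have hinst : i ∉ stackSort t := fun hx => hint (hpt.mem_iff.mp hx)
    have hin1st : i + 1 ∉ stackSort t := fun hx => hin1t (hpt.mem_iff.mp hx)
    constructor
    · have hdd2 : ∀ x ∈ r, x ∉ t ++ [m] := by
        intro x hx hmem'
        rcases List.mem_append.mp hmem' with h' | h'
        · exact hdisj h' (by simp [hx])
        · have : x = m := by simpa using h'
          exact hmnr (this ▸ hx)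
      have h3 := (toggleApplies_middle (l₃ := ([] : List ℕ)) hit hi1t hdd2).mpr hta
      have he2 : (t ++ [m]) ++ r ++ ([] : List ℕ) = t ++ m :: r := by simp
      rw [hl, ← he2]; exact h3
    · have hswl : swapEntries i l = t ++ m :: swapEntries i r := by
        rw [hl, swap_append, swap_eq_self hint hin1t, _root_.swap_cons, if_neg hmi, if_neg hmi1]
      rw [hswl, stackSort_decomp _ _ _ hlt_t (mem_swap_lt hlt_r him), heq, hs,
        swap_append, swap_append, swap_eq_self hinst hin1st, swap_eq_self hmm1 hmm2]
termination_by l.length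
decreasing_by all_goals omega

/-- If the toggle `p i` acts nontrivially on `s(σ)`, then it acts nontrivially on `σ`,
and `s(p i (σ)) = p i (s(σ))`. -/
theorem toggle_stackSort_commute (n i : ℕ) (hi₁ : 1 ≤ i) (hi₂ : i ≤ n - 1)
    (σ : List ℕ) (hσ : IsPermList n σ) (h : ToggleApplies i (stackSort σ)) :
    toggle i σ = swapEntries i σ ∧ stackSort (toggle i σ) = toggle i (stackSort σ) := by
  have hnd : σ.Nodup := hσ.symm.nodup (List.nodup_range' (s := 1) (n := n))
  have hi : i ∈ σ := hσ.mem_iff.mpr (List.mem_range'_1.mpr ⟨hi₁, by omega⟩)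
  have hi1 : i + 1 ∈ σ := hσ.mem_iff.mpr (List.mem_range'_1.mpr ⟨by omega, by omega⟩)
  obtain ⟨h1, h2⟩ := key i σ hnd hi hi1 h
  have e1 : toggle i σ = swapEntries i σ := by rw [toggle, if_pos h1]
  refine ⟨e1, ?_⟩
  rw [e1, toggle, if_pos h, h2]
end
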